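/- arXiv:2306.08282 — 3 statements merged into one kernel-verified Lean document; each statement's English description precedes it below -/
import Mathlib

section
/- Let 1 ≤ p < ∞, let g be admissible, and let u : ℝ^n → ℝ be Lebesgue measurable with μ_g[u](t) < ∞ for every t > 0. Then ∫_{ℝ^n} |u(x)|^p g(x) dx = ∫_{ℝ^n} R_g[u](x)^p g(x) dx (both sides possibly infinite). -/
open Real MeasureTheory Filter Topology Set

/-- The measure determined by `g`: `μ_g(A) = ∫_A g(x) dx`. -/
noncomputable def muG (n : ℕ) (g : EuclideanSpace ℝ (Fin n) → ℝ)
    (A : Set (EuclideanSpace ℝ (Fin n))) : ENNReal :=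
  ∫⁻ x in A, ENNReal.ofReal (g x)

/-- The distribution function of `u` with respect to `g`:
`μ_g[u](t) = μ_g({x : |u(x)| > t})`. -/
noncomputable def distG (n : ℕ) (g u : EuclideanSpace ℝ (Fin n) → ℝ) (t : ℝ) : ENNReal :=
  muG n g {x | t < |u x|}

/-- The rearrangement of `u` with respect to `g`:
`R_g[u](x) = sup {t ≥ 0 : μ_g[u](t) > μ_g(B_{|x|})}`. -/
noncomputable def rearrG (n : ℕ) (g u : EuclideanSpace ℝ (Fin n) → ℝ)
    (x : EuclideanSpace ℝ (Fin n)) : ℝ :=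
  sSup {t : ℝ | 0 ≤ t ∧ muG n g (Metric.ball 0 ‖x‖) < distG n g u t}

/-- `g` is admissible: locally integrable, radial, continuous away from the origin,
nonnegative, and nonincreasing in `|x|`. -/
def Admissible (n : ℕ) (g : EuclideanSpace ℝ (Fin n) → ℝ) : Prop :=
  MeasureTheory.LocallyIntegrable g MeasureTheory.volume ∧
  (∀ x y : EuclideanSpace ℝ (Fin n), ‖x‖ = ‖y‖ → g x = g y) ∧
  ContinuousOn g {x : EuclideanSpace ℝ (Fin n) | x ≠ 0} ∧
  (∀ x : EuclideanSpace ℝ (Fin n), x ≠ 0 → 0 ≤ g x) ∧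
  (∀ x y : EuclideanSpace ℝ (Fin n), x ≠ 0 → y ≠ 0 → ‖x‖ ≤ ‖y‖ → g y ≤ g x)

namespace Stmt10Aux

open Metric

/-- The measure `volume.withDensity (ofReal ∘ g)`. -/
noncomputable def nu (n : ℕ) (g : EuclideanSpace ℝ (Fin n) → ℝ) :
    Measure (EuclideanSpace ℝ (Fin n)) :=
  (volume : Measure (EuclideanSpace ℝ (Fin n))).withDensity fun x => ENNReal.ofReal (g x)

variable {n : ℕ} {g u : EuclideanSpace ℝ (Fin n) → ℝ}

lemma muG_eq {A : Set (EuclideanSpace ℝ (Fin n))} (hA : MeasurableSet A) :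
    muG n g A = nu n g A := (withDensity_apply _ hA).symm

lemma muG_mono {A B : Set (EuclideanSpace ℝ (Fin n))} (h : A ⊆ B) : muG n g A ≤ muG n g B :=
  lintegral_mono' (Measure.restrict_mono h le_rfl) le_rfl

lemma uset_meas (hu : Measurable u) (t : ℝ) :
    MeasurableSet {x : EuclideanSpace ℝ (Fin n) | t < |u x|} :=
  measurableSet_lt measurable_const hu.abs

lemma distG_eq (hu : Measurable u) (t : ℝ) :
    distG n g u t = nu n g {x | t < |u x|} := muG_eq (uset_meas hu t)

lemma distG_anti : Antitone (distG n g u) := fun s t hst =>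
  muG_mono fun x hx => lt_of_le_of_lt hst hx

lemma distG_le_univ (hu : Measurable u) (t : ℝ) : distG n g u t ≤ nu n g Set.univ := by
  rw [distG_eq hu]; exact measure_mono (Set.subset_univ _)

lemma distG_rc (hu : Measurable u) (t : ℝ) :
    distG n g u t = ⨆ k : ℕ, distG n g u (t + 1 / (k + 1)) := by
  have hset : {x : EuclideanSpace ℝ (Fin n) | t < |u x|} =
      ⋃ k : ℕ, {x : EuclideanSpace ℝ (Fin n) | t + 1 / (k + 1) < |u x|} := by
    ext x
    simp only [Set.mem_setOf_eq, Set.mem_iUnion]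
    constructor
    · intro h
      obtain ⟨k, hk⟩ := exists_nat_one_div_lt (sub_pos.2 h)
      exact ⟨k, by linarith⟩
    · rintro ⟨k, hk⟩
      have h1 : (0 : ℝ) < 1 / (k + 1) := by positivity
      linarith
  have hmono : Monotone fun k : ℕ =>
      {x : EuclideanSpace ℝ (Fin n) | t + 1 / (k + 1) < |u x|} := by
    intro k l hkl x hx
    have h1 : (1 : ℝ) / (l + 1) ≤ 1 / (k + 1) := by
      apply one_div_le_one_div_of_le (by positivity)
      have : (k : ℝ) ≤ l := by exact_mod_cast hkl
      linarith
    simp only [Set.mem_setOf_eq] at hx ⊢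
    linarith
  calc distG n g u t = nu n g {x | t < |u x|} := distG_eq hu t
    _ = ⨆ k : ℕ, nu n g {x : EuclideanSpace ℝ (Fin n) | t + 1 / (k + 1) < |u x|} := by
        rw [hset, hmono.measure_iUnion]
    _ = ⨆ k : ℕ, distG n g u (t + 1 / (k + 1)) := by
        simp_rw [distG_eq hu]

lemma distG_tendsto (hu : Measurable u)
    (hfin : ∀ t : ℝ, 0 < t → distG n g u t < ⊤) :
    Tendsto (fun k : ℕ => distG n g u k) atTop (𝓝 0) := by
  have h0 : (⋂ k : ℕ, {x : EuclideanSpace ℝ (Fin n) | (k : ℝ) < |u x|}) = ∅ := by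
    ext x
    simp only [Set.mem_iInter, Set.mem_setOf_eq, Set.mem_empty_iff_false, iff_false, not_forall,
      not_lt]
    obtain ⟨k, hk⟩ := exists_nat_gt |u x|
    exact ⟨k, hk.le⟩
  have hanti : Antitone fun k : ℕ => {x : EuclideanSpace ℝ (Fin n) | (k : ℝ) < |u x|} := by
    intro k l hkl x hx
    simp only [Set.mem_setOf_eq] at hx ⊢
    exact lt_of_le_of_lt (by exact_mod_cast hkl) hx
  have h := tendsto_measure_iInter_atTop (μ := nu n g)
    (fun k => (uset_meas hu _).nullMeasurableSet) hanti
    ⟨1, by rw [← distG_eq hu]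
           simpa using (hfin 1 one_pos).ne⟩
  rw [h0, measure_empty] at h
  have heq : (fun k : ℕ => distG n g u k) = (nu n g ∘ fun k : ℕ =>
      {x : EuclideanSpace ℝ (Fin n) | (k : ℝ) < |u x|}) := by
    funext k; exact distG_eq hu k
  rw [heq]; exact h

lemma mball_lt_top (hgl : LocallyIntegrable g volume) (r : ℝ) :
    muG n g (ball (0 : EuclideanSpace ℝ (Fin n)) r) < ⊤ := by
  have h := hgl.integrableOn_isCompact (isCompact_closedBall (0 : EuclideanSpace ℝ (Fin n)) r)
  have h2 : ∫⁻ x in closedBall (0 : EuclideanSpace ℝ (Fin n)) r, ENNReal.ofReal (g x) < ⊤ :=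
    lt_of_le_of_lt (lintegral_mono fun x => Real.ofReal_le_enorm (g x)) h.2.lt_top
  exact lt_of_le_of_lt (muG_mono ball_subset_closedBall) h2

lemma rearr_nonneg (x : EuclideanSpace ℝ (Fin n)) : 0 ≤ rearrG n g u x :=
  Real.sSup_nonneg fun _ ht => ht.1

lemma bddAbove_S (hu : Measurable u) (hfin : ∀ t : ℝ, 0 < t → distG n g u t < ⊤)
    {r : ℝ} (hm : 0 < muG n g (ball (0 : EuclideanSpace ℝ (Fin n)) r)) :
    BddAbove {t : ℝ | 0 ≤ t ∧ muG n g (ball (0 : EuclideanSpace ℝ (Fin n)) r) < distG n g u t} := by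
  obtain ⟨K, hK⟩ := ((distG_tendsto hu hfin).eventually_lt_const hm).exists
  refine ⟨K, fun t ht => ?_⟩
  by_contra hcon
  push_neg at hcon
  have h1 : distG n g u t ≤ distG n g u K := distG_anti hcon.le
  exact absurd (ht.2.trans_le h1) (not_lt.2 hK.le)

lemma lt_rearr_iff (hu : Measurable u) (hfin : ∀ t : ℝ, 0 < t → distG n g u t < ⊤)
    (hpos : ∀ r : ℝ, 0 < r → 0 < muG n g (ball (0 : EuclideanSpace ℝ (Fin n)) r))
    {x : EuclideanSpace ℝ (Fin n)} (hx : x ≠ 0) {t : ℝ} (ht : 0 ≤ t) :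
    t < rearrG n g u x ↔ muG n g (ball 0 ‖x‖) < distG n g u t := by
  have hm := hpos ‖x‖ (norm_pos_iff.2 hx)
  have hbdd := bddAbove_S hu hfin hm
  constructor
  · intro h
    have hne : {s : ℝ | 0 ≤ s ∧ muG n g (ball (0 : EuclideanSpace ℝ (Fin n)) ‖x‖)
        < distG n g u s}.Nonempty := by
      by_contra hcon
      rw [Set.not_nonempty_iff_eq_empty] at hcon
      rw [rearrG, hcon, Real.sSup_empty] at h
      exact absurd h (not_lt.2 ht)
    obtain ⟨s, hs, hts⟩ := exists_lt_of_lt_csSup hne h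
    exact lt_of_lt_of_le hs.2 (distG_anti hts.le)
  · intro h
    rw [distG_rc hu t, lt_iSup_iff] at h
    obtain ⟨k, hk⟩ := h
    have h1 : (0 : ℝ) < 1 / (k + 1) := by positivity
    have hmem : t + 1 / ((k : ℝ) + 1) ∈ {s : ℝ | 0 ≤ s ∧
        muG n g (ball (0 : EuclideanSpace ℝ (Fin n)) ‖x‖) < distG n g u s} :=
      ⟨by linarith, hk⟩
    have h2 := le_csSup hbdd hmem
    calc t < t + 1 / ((k : ℝ) + 1) := by linarith
      _ ≤ rearrG n g u x := h2

lemma lowerset_meas (c : ENNReal) :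
    MeasurableSet {x : EuclideanSpace ℝ (Fin n) | muG n g (ball 0 ‖x‖) < c} := by
  have h : {x : EuclideanSpace ℝ (Fin n) | muG n g (ball 0 ‖x‖) < c} =
      (fun x : EuclideanSpace ℝ (Fin n) => ‖x‖) ⁻¹'
        {r : ℝ | muG n g (ball (0 : EuclideanSpace ℝ (Fin n)) r) < c} := rfl
  rw [h]
  apply measurable_norm
  apply Set.OrdConnected.measurableSet
  constructor
  intro r _ s hs q hq
  exact lt_of_le_of_lt (muG_mono (ball_subset_ball hq.2)) hs

lemma rearr_meas (hu : Measurable u) (hfin : ∀ t : ℝ, 0 < t → distG n g u t < ⊤)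
    (hpos : ∀ r : ℝ, 0 < r → 0 < muG n g (ball (0 : EuclideanSpace ℝ (Fin n)) r)) :
    Measurable (rearrG n g u) := by
  apply measurable_of_Ioi
  intro t
  rcases lt_or_ge t 0 with ht | ht
  · have h : rearrG n g u ⁻¹' Set.Ioi t = Set.univ :=
      Set.eq_univ_of_forall fun x => lt_of_lt_of_le ht (rearr_nonneg x)
    rw [h]; exact MeasurableSet.univ
  · have h : rearrG n g u ⁻¹' Set.Ioi t =
        ({x : EuclideanSpace ℝ (Fin n) | muG n g (ball 0 ‖x‖) < distG n g u t} \ {0}) ∪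
          (rearrG n g u ⁻¹' Set.Ioi t ∩ {0}) := by
      ext x
      by_cases hx : x = 0
      · subst hx
        simp
      · simp only [Set.mem_preimage, Set.mem_Ioi, Set.mem_union, Set.mem_diff,
          Set.mem_setOf_eq, Set.mem_singleton_iff, Set.mem_inter_iff, hx, and_false, or_false,
          and_true, not_false_iff]
        exact lt_rearr_iff hu hfin hpos hx ht
    rw [h]
    exact ((lowerset_meas _).diff (measurableSet_singleton 0)).union
      ((Set.subsingleton_singleton.anti Set.inter_subset_right).measurableSet)

lemma measure_sublevel (hn : n ≠ 0) (hgl : LocallyIntegrable g volume)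
    {c : ENNReal} (hct : c ≠ ⊤) (hle : c ≤ nu n g Set.univ) :
    nu n g {x : EuclideanSpace ℝ (Fin n) | muG n g (ball 0 ‖x‖) < c} = c := by
  haveI : Nonempty (Fin n) := ⟨⟨0, Nat.pos_of_ne_zero hn⟩⟩
  haveI : Nontrivial (EuclideanSpace ℝ (Fin n)) := inferInstance
  rcases eq_or_ne c 0 with rfl | hc0
  · have h : {x : EuclideanSpace ℝ (Fin n) | muG n g (ball 0 ‖x‖) < 0} = ∅ := by
      ext x; simp
    rw [h, measure_empty]
  by_cases hall : ∀ r : ℝ, muG n g (ball (0 : EuclideanSpace ℝ (Fin n)) r) < c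
  · have huniv : {x : EuclideanSpace ℝ (Fin n) | muG n g (ball 0 ‖x‖) < c} = Set.univ :=
      Set.eq_univ_of_forall fun x => hall _
    rw [huniv]
    refine le_antisymm ?_ hle
    have hU : (Set.univ : Set (EuclideanSpace ℝ (Fin n))) =
        ⋃ k : ℕ, ball (0 : EuclideanSpace ℝ (Fin n)) k := by
      ext x
      simp only [Set.mem_univ, Set.mem_iUnion, mem_ball, dist_zero_right, true_iff]
      obtain ⟨k, hk⟩ := exists_nat_gt ‖x‖
      exact ⟨k, hk⟩
    have hmono : Monotone fun k : ℕ => ball (0 : EuclideanSpace ℝ (Fin n)) k := fun k l hkl =>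
      ball_subset_ball (by exact_mod_cast hkl)
    rw [hU, hmono.measure_iUnion]
    exact iSup_le fun k => le_of_lt (by rw [← muG_eq measurableSet_ball]; exact hall k)
  · push_neg at hall
    obtain ⟨r0, hr0⟩ := hall
    set T : Set ℝ := {r : ℝ | c ≤ muG n g (ball (0 : EuclideanSpace ℝ (Fin n)) r)} with hT
    have hTne : T.Nonempty := ⟨r0, hr0⟩
    have hTbdd : BddBelow T := by
      refine ⟨0, fun r hr => le_of_not_gt fun hneg => ?_⟩
      have hball : ball (0 : EuclideanSpace ℝ (Fin n)) r = ∅ := ball_eq_empty.2 hneg.le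
      have : c ≤ 0 := by
        have := hr
        rw [hT, Set.mem_setOf_eq, hball] at this
        simpa [muG] using this
      exact hc0 (le_antisymm this zero_le)
    set R := sInf T with hR
    have hlow : ∀ s : ℝ, s < R → muG n g (ball (0 : EuclideanSpace ℝ (Fin n)) s) < c := by
      intro s hs
      by_contra hcon
      push_neg at hcon
      exact absurd (csInf_le hTbdd hcon) (not_le.2 hs)
    have hup : ∀ s : ℝ, R < s → c ≤ muG n g (ball (0 : EuclideanSpace ℝ (Fin n)) s) := by
      intro s hs
      obtain ⟨r, hrT, hrs⟩ := exists_lt_of_csInf_lt hTne hs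
      exact hrT.trans (muG_mono (ball_subset_ball hrs.le))
    -- the sphere and closed ball
    have hsphere : nu n g (sphere (0 : EuclideanSpace ℝ (Fin n)) R) = 0 := by
      have hv : volume (sphere (0 : EuclideanSpace ℝ (Fin n)) R) = 0 :=
        Measure.addHaar_sphere _ _ _
      exact (withDensity_absolutelyContinuous volume _) hv
    have hcb_le : nu n g (closedBall (0 : EuclideanSpace ℝ (Fin n)) R) ≤
        muG n g (ball (0 : EuclideanSpace ℝ (Fin n)) R) := by
      rw [← ball_union_sphere, muG_eq measurableSet_ball]
      exact (measure_union_le _ _).trans (by rw [hsphere, add_zero])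
    -- c ≤ muG (ball R)
    have hRge : c ≤ muG n g (ball (0 : EuclideanSpace ℝ (Fin n)) R) := by
      have h1 : closedBall (0 : EuclideanSpace ℝ (Fin n)) R =
          ⋂ k : ℕ, ball (0 : EuclideanSpace ℝ (Fin n)) (R + 1 / (k + 1)) := by
        ext x
        simp only [mem_closedBall, mem_ball, dist_zero_right, Set.mem_iInter]
        constructor
        · intro h k
          have h2 : (0 : ℝ) < 1 / ((k : ℝ) + 1) := by positivity
          linarith
        · intro h
          by_contra hcon
          push_neg at hcon
          obtain ⟨k, hk⟩ := exists_nat_one_div_lt (sub_pos.2 hcon)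
          have := h k
          have : (1 : ℝ) / ((k : ℝ) + 1) < ‖x‖ - R := hk
          linarith [h k]
      have hanti : Antitone fun k : ℕ =>
          ball (0 : EuclideanSpace ℝ (Fin n)) (R + 1 / ((k : ℝ) + 1)) := by
        intro k l hkl
        apply ball_subset_ball
        have h1 : (1 : ℝ) / ((l : ℝ) + 1) ≤ 1 / ((k : ℝ) + 1) := by
          apply one_div_le_one_div_of_le (by positivity)
          have : (k : ℝ) ≤ l := by exact_mod_cast hkl
          linarith
        linarith
      have h2 : nu n g (closedBall (0 : EuclideanSpace ℝ (Fin n)) R) =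
          ⨅ k : ℕ, nu n g (ball (0 : EuclideanSpace ℝ (Fin n)) (R + 1 / (k + 1))) := by
        rw [h1]
        exact hanti.measure_iInter (fun k => measurableSet_ball.nullMeasurableSet)
          ⟨0, by rw [← muG_eq measurableSet_ball]; exact (mball_lt_top hgl _).ne⟩
      have h3 : c ≤ nu n g (closedBall (0 : EuclideanSpace ℝ (Fin n)) R) := by
        rw [h2]
        refine le_iInf fun k => ?_
        rw [← muG_eq measurableSet_ball]
        have h4 : (0 : ℝ) < 1 / ((k : ℝ) + 1) := by positivity
        exact hup _ (by linarith)
      exact h3.trans hcb_le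
    -- muG (ball R) ≤ c
    have hRle : muG n g (ball (0 : EuclideanSpace ℝ (Fin n)) R) ≤ c := by
      have h1 : ball (0 : EuclideanSpace ℝ (Fin n)) R =
          ⋃ k : ℕ, ball (0 : EuclideanSpace ℝ (Fin n)) (R - 1 / (k + 1)) := by
        ext x
        simp only [mem_ball, dist_zero_right, Set.mem_iUnion]
        constructor
        · intro h
          obtain ⟨k, hk⟩ := exists_nat_one_div_lt (sub_pos.2 h)
          exact ⟨k, by linarith⟩
        · rintro ⟨k, hk⟩
          have h2 : (0 : ℝ) < 1 / ((k : ℝ) + 1) := by positivity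
          linarith
      have hmono : Monotone fun k : ℕ =>
          ball (0 : EuclideanSpace ℝ (Fin n)) (R - 1 / ((k : ℝ) + 1)) := by
        intro k l hkl
        apply ball_subset_ball
        have h2 : (1 : ℝ) / ((l : ℝ) + 1) ≤ 1 / ((k : ℝ) + 1) := by
          apply one_div_le_one_div_of_le (by positivity)
          have : (k : ℝ) ≤ l := by exact_mod_cast hkl
          linarith
        linarith
      rw [muG_eq measurableSet_ball, h1, hmono.measure_iUnion]
      refine iSup_le fun k => ?_
      rw [← muG_eq measurableSet_ball]
      refine le_of_lt (hlow _ ?_)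
      have h2 : (0 : ℝ) < 1 / ((k : ℝ) + 1) := by positivity
      linarith
    have hball : muG n g (ball (0 : EuclideanSpace ℝ (Fin n)) R) = c := le_antisymm hRle hRge
    have hset : {x : EuclideanSpace ℝ (Fin n) | muG n g (ball 0 ‖x‖) < c} =
        ball (0 : EuclideanSpace ℝ (Fin n)) R := by
      ext x
      simp only [Set.mem_setOf_eq, mem_ball, dist_zero_right]
      constructor
      · intro hx
        by_contra hcon
        push_neg at hcon
        rcases eq_or_lt_of_le hcon with heq | hlt
        · rw [← heq] at hx
          exact absurd hball.ge (not_le.2 hx)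
        · exact absurd (hup _ hlt) (not_le.2 hx)
      · intro hx
        exact hlow _ hx
    rw [hset, ← muG_eq measurableSet_ball, hball]

lemma vol_singleton_zero (hn : n ≠ 0) :
    (volume : Measure (EuclideanSpace ℝ (Fin n))) ({0} : Set (EuclideanSpace ℝ (Fin n))) = 0 := by
  haveI : Nonempty (Fin n) := ⟨⟨0, Nat.pos_of_ne_zero hn⟩⟩
  haveI : Nontrivial (EuclideanSpace ℝ (Fin n)) := inferInstance
  have h : ({0} : Set (EuclideanSpace ℝ (Fin n))) ⊆ sphere (0 : EuclideanSpace ℝ (Fin n)) 0 := by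
    intro x hx
    simp only [Set.mem_singleton_iff] at hx
    simp [hx]
  exact measure_mono_null h (Measure.addHaar_sphere _ _ _)

lemma singleton_null (hn : n ≠ 0) :
    nu n g ({0} : Set (EuclideanSpace ℝ (Fin n))) = 0 :=
  (withDensity_absolutelyContinuous volume _) (vol_singleton_zero hn)

lemma equimeasurable (hn : n ≠ 0) (hgl : LocallyIntegrable g volume) (hu : Measurable u)
    (hfin : ∀ t : ℝ, 0 < t → distG n g u t < ⊤)
    (hpos : ∀ r : ℝ, 0 < r → 0 < muG n g (ball (0 : EuclideanSpace ℝ (Fin n)) r))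
    {t : ℝ} (ht : 0 < t) :
    nu n g {x : EuclideanSpace ℝ (Fin n) | t < rearrG n g u x} = distG n g u t := by
  have h1 : nu n g {x : EuclideanSpace ℝ (Fin n) | t < rearrG n g u x} =
      nu n g {x : EuclideanSpace ℝ (Fin n) | muG n g (ball 0 ‖x‖) < distG n g u t} := by
    apply measure_congr
    rw [ae_eq_set]
    constructor
    · refine measure_mono_null (fun x hx => ?_) (singleton_null hn)
      simp only [Set.mem_diff, Set.mem_setOf_eq] at hx
      simp only [Set.mem_singleton_iff]
      by_contra hx0
      exact hx.2 ((lt_rearr_iff hu hfin hpos hx0 ht.le).1 hx.1)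
    · refine measure_mono_null (fun x hx => ?_) (singleton_null hn)
      simp only [Set.mem_diff, Set.mem_setOf_eq] at hx
      simp only [Set.mem_singleton_iff]
      by_contra hx0
      exact hx.2 ((lt_rearr_iff hu hfin hpos hx0 ht.le).2 hx.1)
  rw [h1]
  exact measure_sublevel hn hgl (hfin t ht).ne (distG_le_univ hu t)

end Stmt10Aux


/-- If `1 ≤ p < ∞`, `g` is admissible and `u` is measurable with finite distribution
function for every `t > 0`, then `∫ |u|^p g = ∫ (R_g[u])^p g` (both sides possibly
infinite). -/
theorem stmt10 (n : ℕ) (p : ℝ) (hp : 1 ≤ p) (g u : EuclideanSpace ℝ (Fin n) → ℝ)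
    (hg : Admissible n g) (hu : Measurable u)
    (hfin : ∀ t : ℝ, 0 < t → distG n g u t < ⊤) :
    ∫⁻ x, ENNReal.ofReal (|u x| ^ p) * ENNReal.ofReal (g x) =
      ∫⁻ x, ENNReal.ofReal ((rearrG n g u x) ^ p) * ENNReal.ofReal (g x) := by
  obtain ⟨hgl, hrad, hcont, hnn, hmon⟩ := hg
  have hgm : Measurable g := by
    apply measurable_of_continuousOn_compl_singleton (0 : EuclideanSpace ℝ (Fin n))
    exact hcont
  have hp0 : 0 < p := lt_of_lt_of_le zero_lt_one hp
  rcases Nat.eq_zero_or_pos n with hn | hnpos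
  · -- the zero-dimensional case: the whole space is a single point
    subst hn
    apply lintegral_congr
    intro x
    have hx0 : x = 0 := Subsingleton.elim x 0
    rcases le_or_gt (g x) 0 with hg0 | hg0
    · rw [ENNReal.ofReal_eq_zero.2 hg0, mul_zero, mul_zero]
    · have hre : rearrG 0 g u x = |u x| := by
        subst hx0
        have hmu0 : muG 0 g (Metric.ball (0 : EuclideanSpace ℝ (Fin 0))
            ‖(0 : EuclideanSpace ℝ (Fin 0))‖) = 0 := by
          simp [muG]
        have hd : ∀ t : ℝ, t < |u 0| → 0 < distG 0 g u t := by
          intro t ht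
          have hset : {y : EuclideanSpace ℝ (Fin 0) | t < |u y|} = Set.univ :=
            Set.eq_univ_of_forall fun y => by
              show t < |u y|
              rw [Subsingleton.elim y 0]; exact ht
          rw [distG, hset, muG, Measure.restrict_univ]
          have h1 : ∫⁻ y : EuclideanSpace ℝ (Fin 0), ENNReal.ofReal (g y) =
              ENNReal.ofReal (g 0) * volume (Set.univ : Set (EuclideanSpace ℝ (Fin 0))) := by
            rw [lintegral_unique]
            congr 2
            exact congrArg g (Subsingleton.elim _ _)
          rw [h1]
          exact ENNReal.mul_pos (by simpa [ENNReal.ofReal_pos] using hg0)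
            (isOpen_univ.measure_pos volume Set.univ_nonempty).ne'
        have hd' : ∀ t : ℝ, |u 0| ≤ t → distG 0 g u t = 0 := by
          intro t ht
          have hset : {y : EuclideanSpace ℝ (Fin 0) | t < |u y|} = ∅ := by
            ext y
            simp only [Set.mem_setOf_eq, Set.mem_empty_iff_false, iff_false, not_lt]
            rw [Subsingleton.elim y 0]; exact ht
          rw [distG, hset]
          simp [muG]
        have hS : {t : ℝ | 0 ≤ t ∧ muG 0 g (Metric.ball (0 : EuclideanSpace ℝ (Fin 0))
            ‖(0 : EuclideanSpace ℝ (Fin 0))‖) < distG 0 g u t} = Set.Ico 0 |u 0| := by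
          ext t
          simp only [Set.mem_setOf_eq, hmu0, Set.mem_Ico]
          constructor
          · rintro ⟨h1, h2⟩
            refine ⟨h1, ?_⟩
            by_contra hcon
            push_neg at hcon
            rw [hd' t hcon] at h2
            exact absurd h2 (lt_irrefl 0)
          · rintro ⟨h1, h2⟩
            exact ⟨h1, hd t h2⟩
        rw [rearrG, hS]
        rcases eq_or_lt_of_le (abs_nonneg (u 0)) with h0 | h0
        · rw [← h0]
          simp
        · exact csSup_Ico h0
      rw [hre]
  · have hn : n ≠ 0 := hnpos.ne'
    by_cases hpos : ∀ r : ℝ, 0 < r →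
        0 < muG n g (Metric.ball (0 : EuclideanSpace ℝ (Fin n)) r)
    · -- nondegenerate case
      have hum : Measurable fun x => |u x| := hu.abs
      have hrm : Measurable (rearrG n g u) := Stmt10Aux.rearr_meas hu hfin hpos
      have hL : ∫⁻ x, ENNReal.ofReal (|u x| ^ p) * ENNReal.ofReal (g x) =
          ∫⁻ x, ENNReal.ofReal (|u x| ^ p) ∂(Stmt10Aux.nu n g) := by
        rw [Stmt10Aux.nu,
          lintegral_withDensity_eq_lintegral_mul volume hgm.ennreal_ofReal (by fun_prop)]
        congr 1
        funext x
        exact mul_comm _ _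
      have hRR : ∫⁻ x, ENNReal.ofReal ((rearrG n g u x) ^ p) * ENNReal.ofReal (g x) =
          ∫⁻ x, ENNReal.ofReal ((rearrG n g u x) ^ p) ∂(Stmt10Aux.nu n g) := by
        rw [Stmt10Aux.nu,
          lintegral_withDensity_eq_lintegral_mul volume hgm.ennreal_ofReal
            (hrm.pow measurable_const).ennreal_ofReal]
        congr 1
        funext x
        exact mul_comm _ _
      rw [hL, hRR,
        lintegral_rpow_eq_lintegral_meas_lt_mul (Stmt10Aux.nu n g)
          (Eventually.of_forall fun x => abs_nonneg (u x)) hum.aemeasurable hp0,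
        lintegral_rpow_eq_lintegral_meas_lt_mul (Stmt10Aux.nu n g)
          (Eventually.of_forall fun x => Stmt10Aux.rearr_nonneg x) hrm.aemeasurable hp0]
      congr 1
      apply setLIntegral_congr_fun measurableSet_Ioi
      intro t ht
      beta_reduce
      have h1 := Stmt10Aux.equimeasurable hn hgl hu hfin hpos ht
      have h2 := Stmt10Aux.distG_eq (g := g) hu t
      rw [show {a : EuclideanSpace ℝ (Fin n) | t < |u a|} = {x | t < |u x|} from rfl, ← h2, ← h1]
    · -- degenerate case: `g` vanishes a.e.
      push_neg at hpos
      obtain ⟨r, hr, hrle⟩ := hpos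
      have hr0 : muG n g (Metric.ball (0 : EuclideanSpace ℝ (Fin n)) r) = 0 :=
        le_antisymm hrle zero_le
      have hres : (fun x => ENNReal.ofReal (g x)) =ᵐ[volume.restrict
          (Metric.ball (0 : EuclideanSpace ℝ (Fin n)) r)] 0 :=
        (lintegral_eq_zero_iff hgm.ennreal_ofReal).1 hr0
      have hbadmeas : MeasurableSet {x : EuclideanSpace ℝ (Fin n) | 0 < g x} :=
        measurableSet_lt measurable_const hgm
      have hbad : volume ({x : EuclideanSpace ℝ (Fin n) | 0 < g x} ∩
          Metric.ball (0 : EuclideanSpace ℝ (Fin n)) r) = 0 := by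
        have h1 := ae_iff.1 hres
        rw [Measure.restrict_apply' measurableSet_ball] at h1
        refine measure_mono_null (fun x hx => ?_) h1
        simp only [Set.mem_inter_iff, Set.mem_setOf_eq] at hx ⊢
        refine ⟨?_, hx.2⟩
        simp only [Pi.zero_apply]
        rw [ENNReal.ofReal_eq_zero]
        push_neg
        exact hx.1
      have hgz : ∀ y : EuclideanSpace ℝ (Fin n), y ≠ 0 → g y ≤ 0 := by
        intro y hy
        by_contra hcon
        push_neg at hcon
        set r' := min r ‖y‖ with hr'
        have hr'pos : 0 < r' := lt_min hr (norm_pos_iff.2 hy)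
        have hsub : Metric.ball (0 : EuclideanSpace ℝ (Fin n)) r' ⊆
            ({x : EuclideanSpace ℝ (Fin n) | 0 < g x} ∩
              Metric.ball (0 : EuclideanSpace ℝ (Fin n)) r) ∪ {0} := by
          intro x hx
          rw [Metric.mem_ball, dist_zero_right] at hx
          by_cases hx0 : x = 0
          · exact Or.inr (by simp [hx0])
          · refine Or.inl ⟨?_, ?_⟩
            · have h2 : g y ≤ g x := hmon x y hx0 hy (le_of_lt (lt_of_lt_of_le hx (min_le_right _ _)))
              exact lt_of_lt_of_le hcon h2
            · rw [Metric.mem_ball, dist_zero_right]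
              exact lt_of_lt_of_le hx (min_le_left _ _)
        have hle0 : volume (Metric.ball (0 : EuclideanSpace ℝ (Fin n)) r') = 0 := by
          refine measure_mono_null hsub ?_
          refine measure_union_null hbad (Stmt10Aux.vol_singleton_zero hn)
        exact absurd hle0 (Metric.measure_ball_pos volume _ hr'pos).ne'
      have hae : ∀ᵐ x ∂(volume : Measure (EuclideanSpace ℝ (Fin n))),
          ENNReal.ofReal (g x) = 0 := by
        rw [ae_iff]
        refine measure_mono_null (fun x hx => ?_) (Stmt10Aux.vol_singleton_zero hn)
        simp only [Set.mem_setOf_eq] at hx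
        simp only [Set.mem_singleton_iff]
        by_contra hx0
        exact hx (ENNReal.ofReal_eq_zero.2 (hgz x hx0))
      have hz : ∀ f : EuclideanSpace ℝ (Fin n) → ℝ,
          ∫⁻ x, ENNReal.ofReal (|f x| ^ p) * ENNReal.ofReal (g x) = 0 := by
        intro f
        rw [← lintegral_zero]
        apply lintegral_congr_ae
        filter_upwards [hae] with x hx
        rw [hx, mul_zero]
      have hz2 : ∫⁻ x, ENNReal.ofReal ((rearrG n g u x) ^ p) * ENNReal.ofReal (g x) = 0 := by
        rw [← lintegral_zero]
        apply lintegral_congr_ae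
        filter_upwards [hae] with x hx
        rw [hx, mul_zero]
      rw [hz u, hz2]
end

section
/- Let g be admissible and let u, v : ℝ^n → ℝ be Lebesgue measurable with μ_g[u](t) < ∞ and μ_g[v](t) < ∞ for every t > 0. Then the Hardy–Littlewood-type inequality ∫_{ℝ^n} |u(x)·v(x)| g(x) dx ≤ ∫_{ℝ^n} R_g[u](x)·R_g[v](x) g(x) dx holds. -/
open Real MeasureTheory Filter Topology Set

section AuxHL

/-- Double layer-cake formula for a product of two nonnegative functions. -/
private lemma double_layercake {α : Type*} [MeasurableSpace α] (μ : Measure α) {f h : α → ℝ}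
    (hf : Measurable f) (hh : Measurable h) (hf0 : ∀ x, 0 ≤ f x) (hh0 : ∀ x, 0 ≤ h x) :
    ∫⁻ x, ENNReal.ofReal (f x) * ENNReal.ofReal (h x) ∂μ
      = ∫⁻ s in Ioi (0:ℝ), ∫⁻ t in Ioi (0:ℝ), μ ({x | s < f x} ∩ {x | t < h x}) := by
  have hh' : Measurable fun x => ENNReal.ofReal (h x) := hh.ennreal_ofReal
  have hf' : Measurable fun x => ENNReal.ofReal (f x) := hf.ennreal_ofReal
  have step1 : ∫⁻ x, ENNReal.ofReal (f x) * ENNReal.ofReal (h x) ∂μ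
      = ∫⁻ x, ENNReal.ofReal (f x) ∂(μ.withDensity fun x => ENNReal.ofReal (h x)) := by
    rw [lintegral_withDensity_eq_lintegral_mul μ hh' hf']
    exact lintegral_congr fun x => mul_comm _ _
  rw [step1, lintegral_eq_lintegral_meas_lt _ (ae_of_all _ hf0) hf.aemeasurable]
  refine lintegral_congr fun s => ?_
  rw [withDensity_apply _ (measurableSet_lt measurable_const hf),
    lintegral_eq_lintegral_meas_lt _ (ae_of_all _ hh0) hh.aemeasurable]
  refine lintegral_congr fun t => ?_
  rw [Measure.restrict_apply (measurableSet_lt measurable_const hh), Set.inter_comm]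

private lemma rearr_dim0 (g u : EuclideanSpace ℝ (Fin 0) → ℝ) (hg0 : 0 < g 0) :
    rearrG 0 g u 0 = |u 0| := by
  have hx : ∀ x : EuclideanSpace ℝ (Fin 0), x = 0 := fun x => Subsingleton.elim x 0
  have hmu0 : muG 0 g (Metric.ball 0 ‖(0 : EuclideanSpace ℝ (Fin 0))‖) = 0 := by
    rw [norm_zero, Metric.ball_zero, muG, setLIntegral_empty]
  have hdist : ∀ t : ℝ, (0 < distG 0 g u t ↔ t < |u 0|) := by
    intro t
    by_cases ht : t < |u 0|
    · have hset : {x : EuclideanSpace ℝ (Fin 0) | t < |u x|} = univ := by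
        ext x; simp [hx x, ht]
      rw [distG, muG, hset]
      simp only [Measure.restrict_univ]
      have he : ∫⁻ x : EuclideanSpace ℝ (Fin 0), ENNReal.ofReal (g x)
          = ENNReal.ofReal (g 0) * volume (univ : Set (EuclideanSpace ℝ (Fin 0))) := by
        calc ∫⁻ x : EuclideanSpace ℝ (Fin 0), ENNReal.ofReal (g x)
            = ∫⁻ _ : EuclideanSpace ℝ (Fin 0), ENNReal.ofReal (g 0) :=
              lintegral_congr fun x => by rw [hx x]
          _ = ENNReal.ofReal (g 0) * volume (univ : Set (EuclideanSpace ℝ (Fin 0))) :=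
              lintegral_const _
      rw [he]
      refine ⟨fun _ => ht, fun _ => ENNReal.mul_pos ?_ ?_⟩
      · simpa using (ENNReal.ofReal_pos.mpr hg0).ne'
      · exact (isOpen_univ.measure_pos volume univ_nonempty).ne'
    · have hset : {x : EuclideanSpace ℝ (Fin 0) | t < |u x|} = ∅ := by
        ext x; simp [hx x, ht]
      rw [distG, muG, hset, setLIntegral_empty]
      simp [ht]
  have hS : {t : ℝ | 0 ≤ t ∧ muG 0 g (Metric.ball 0 ‖(0:EuclideanSpace ℝ (Fin 0))‖) < distG 0 g u t}
      = Ico 0 |u 0| := by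
    ext t
    simp only [mem_setOf_eq, hmu0, pos_iff_ne_zero, mem_Ico]
    rw [← pos_iff_ne_zero, hdist t]
  rw [rearrG, hS]
  rcases eq_or_lt_of_le (abs_nonneg (u 0)) with h | h
  · rw [← h, Ico_self, Real.sSup_empty, h]
  · exact csSup_Ico h

private lemma dim0_case (g u v : EuclideanSpace ℝ (Fin 0) → ℝ) :
    ∫⁻ x, ENNReal.ofReal |u x * v x| * ENNReal.ofReal (g x) ≤
      ∫⁻ x, ENNReal.ofReal (rearrG 0 g u x * rearrG 0 g v x) * ENNReal.ofReal (g x) := by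
  have hx : ∀ x : EuclideanSpace ℝ (Fin 0), x = 0 := fun x => Subsingleton.elim x 0
  have hL : ∫⁻ x, ENNReal.ofReal |u x * v x| * ENNReal.ofReal (g x)
      = ENNReal.ofReal |u 0 * v 0| * ENNReal.ofReal (g 0)
          * volume (univ : Set (EuclideanSpace ℝ (Fin 0))) :=
    calc ∫⁻ x, ENNReal.ofReal |u x * v x| * ENNReal.ofReal (g x)
        = ∫⁻ _ : EuclideanSpace ℝ (Fin 0), ENNReal.ofReal |u 0 * v 0| * ENNReal.ofReal (g 0) :=
          lintegral_congr fun x => by rw [hx x]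
      _ = _ := lintegral_const _
  have hR : ∫⁻ x, ENNReal.ofReal (rearrG 0 g u x * rearrG 0 g v x) * ENNReal.ofReal (g x)
      = ENNReal.ofReal (rearrG 0 g u 0 * rearrG 0 g v 0) * ENNReal.ofReal (g 0)
          * volume (univ : Set (EuclideanSpace ℝ (Fin 0))) :=
    calc ∫⁻ x, ENNReal.ofReal (rearrG 0 g u x * rearrG 0 g v x) * ENNReal.ofReal (g x)
        = ∫⁻ _ : EuclideanSpace ℝ (Fin 0),
            ENNReal.ofReal (rearrG 0 g u 0 * rearrG 0 g v 0) * ENNReal.ofReal (g 0) :=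
          lintegral_congr fun x => by rw [hx x]
      _ = _ := lintegral_const _
  rw [hL, hR]
  refine mul_le_mul_left ?_ _
  by_cases hg0 : 0 < g 0
  · rw [rearr_dim0 g u hg0, rearr_dim0 g v hg0, ← abs_mul]
  · have : ENNReal.ofReal (g 0) = 0 := by
      rw [ENNReal.ofReal_eq_zero]; linarith [not_lt.mp hg0]
    rw [this, mul_zero, mul_zero]

private lemma muG_eq (n : ℕ) (g : EuclideanSpace ℝ (Fin n) → ℝ)
    {A : Set (EuclideanSpace ℝ (Fin n))} (hA : MeasurableSet A) :
    muG n g A = (volume.withDensity fun x => ENNReal.ofReal (g x)) A :=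
  (withDensity_apply _ hA).symm

private lemma distG_anti (n : ℕ) (g f : EuclideanSpace ℝ (Fin n) → ℝ) {s t : ℝ} (hst : s ≤ t) :
    distG n g f t ≤ distG n g f s :=
  lintegral_mono_set fun x hx => lt_of_le_of_lt hst hx

/-- One can increase `s` slightly keeping `c < distG f s`. -/
private lemma distG_exists_gt (n : ℕ) (g f : EuclideanSpace ℝ (Fin n) → ℝ) (hf : Measurable f)
    (c : ENNReal) (s : ℝ) (hc : c < distG n g f s) :
    ∃ t : ℝ, s < t ∧ c < distG n g f t := by
  set ν := volume.withDensity fun x : EuclideanSpace ℝ (Fin n) => ENNReal.ofReal (g x) with hν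
  have hmeas : ∀ r : ℝ, MeasurableSet {x : EuclideanSpace ℝ (Fin n) | r < |f x|} :=
    fun r => measurableSet_lt measurable_const hf.abs
  have hU : {x : EuclideanSpace ℝ (Fin n) | s < |f x|}
      = ⋃ k : ℕ, {x | s + ((k : ℝ) + 1)⁻¹ < |f x|} := by
    ext x
    simp only [mem_setOf_eq, mem_iUnion]
    constructor
    · intro hx
      obtain ⟨k, hk⟩ := exists_nat_one_div_lt (sub_pos.mpr hx)
      exact ⟨k, by rw [one_div] at hk; linarith⟩
    · rintro ⟨k, hk⟩
      have : (0:ℝ) < ((k : ℝ) + 1)⁻¹ := by positivity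
      linarith
  have hmono : Monotone fun k : ℕ =>
      {x : EuclideanSpace ℝ (Fin n) | s + ((k : ℝ) + 1)⁻¹ < |f x|} := by
    intro k j hkj x hx
    have hc' : (k : ℝ) ≤ (j : ℝ) := Nat.cast_le.mpr hkj
    have h1 : ((j : ℝ) + 1)⁻¹ ≤ ((k : ℝ) + 1)⁻¹ := by
      apply inv_anti₀ (by positivity)
      linarith
    simp only [mem_setOf_eq] at hx ⊢
    linarith
  have hsup : distG n g f s = ⨆ k : ℕ, distG n g f (s + ((k : ℝ) + 1)⁻¹) := by
    have h1 : distG n g f s = ν {x | s < |f x|} := muG_eq n g (hmeas s)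
    have h2 : ∀ k : ℕ, distG n g f (s + ((k : ℝ) + 1)⁻¹)
        = ν {x | s + ((k : ℝ) + 1)⁻¹ < |f x|} := fun k => muG_eq n g (hmeas _)
    rw [h1, hU, Directed.measure_iUnion hmono.directed_le]
    exact iSup_congr fun k => (h2 k).symm
  rw [hsup] at hc
  obtain ⟨k, hk⟩ := lt_iSup_iff.mp hc
  refine ⟨s + ((k : ℝ) + 1)⁻¹, ?_, hk⟩
  have : (0:ℝ) < ((k : ℝ) + 1)⁻¹ := by positivity
  linarith

private lemma distG_tendsto (n : ℕ) (g f : EuclideanSpace ℝ (Fin n) → ℝ) (hf : Measurable f)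
    (hfin : ∀ t : ℝ, 0 < t → distG n g f t < ⊤) {c : ENNReal} (hc : 0 < c) :
    ∃ k : ℕ, distG n g f k < c := by
  set ν := volume.withDensity fun x : EuclideanSpace ℝ (Fin n) => ENNReal.ofReal (g x) with hν
  have hmeas : ∀ r : ℝ, MeasurableSet {x : EuclideanSpace ℝ (Fin n) | r < |f x|} :=
    fun r => measurableSet_lt measurable_const hf.abs
  have heq : ∀ k : ℕ, distG n g f k = ν {x | (k : ℝ) < |f x|} := fun k => muG_eq n g (hmeas _)
  have hanti : Antitone fun k : ℕ => {x : EuclideanSpace ℝ (Fin n) | (k : ℝ) < |f x|} := by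
    intro k j hkj x hx
    have hc' : (k : ℝ) ≤ (j : ℝ) := Nat.cast_le.mpr hkj
    simp only [mem_setOf_eq] at hx ⊢
    linarith
  have hiInt : ⋂ k : ℕ, {x : EuclideanSpace ℝ (Fin n) | (k : ℝ) < |f x|} = ∅ := by
    ext x
    simp only [mem_iInter, mem_setOf_eq, mem_empty_iff_false, iff_false, not_forall, not_lt]
    obtain ⟨k, hk⟩ := exists_nat_gt |f x|
    exact ⟨k, hk.le⟩
  have htd : Tendsto (fun k : ℕ => ν {x | (k : ℝ) < |f x|}) atTop (𝓝 0) := by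
    have := tendsto_measure_iInter_atTop (μ := ν)
      (s := fun k : ℕ => {x : EuclideanSpace ℝ (Fin n) | (k : ℝ) < |f x|})
      (fun k => (hmeas (k : ℝ)).nullMeasurableSet) hanti
      ⟨1, by rw [← heq 1]; exact (hfin _ (by norm_num)).ne⟩
    rw [hiInt, measure_empty] at this
    exact this
  obtain ⟨k, hk⟩ := (htd.eventually_lt_const hc).exists
  exact ⟨k, by rw [heq]; exact hk⟩

private lemma rearr_facts (n : ℕ) (g f : EuclideanSpace ℝ (Fin n) → ℝ) (hf : Measurable f)
    (hfin : ∀ t : ℝ, 0 < t → distG n g f t < ⊤)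
    (hpos : ∀ r : ℝ, 0 < r → 0 < muG n g (Metric.ball 0 r)) :
    (∀ x, 0 ≤ rearrG n g f x) ∧
    (∀ s : ℝ, 0 ≤ s → ∀ x : EuclideanSpace ℝ (Fin n), x ≠ 0 →
      (s < rearrG n g f x ↔ muG n g (Metric.ball 0 ‖x‖) < distG n g f s)) ∧
    Measurable (rearrG n g f) := by
  have hnonneg : ∀ x, 0 ≤ rearrG n g f x := fun x => Real.sSup_nonneg (fun t ht => ht.1)
  have hbdd : ∀ x : EuclideanSpace ℝ (Fin n), x ≠ 0 →
      BddAbove {t : ℝ | 0 ≤ t ∧ muG n g (Metric.ball 0 ‖x‖) < distG n g f t} := by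
    intro x hx
    obtain ⟨k, hk⟩ := distG_tendsto n g f hf hfin (hpos ‖x‖ (norm_pos_iff.mpr hx))
    refine ⟨k, fun t ht => ?_⟩
    by_contra hgt
    push_neg at hgt
    exact absurd (lt_of_le_of_lt (distG_anti n g f hgt.le) hk) (not_lt.mpr ht.2.le)
  have hiff : ∀ s : ℝ, 0 ≤ s → ∀ x : EuclideanSpace ℝ (Fin n), x ≠ 0 →
      (s < rearrG n g f x ↔ muG n g (Metric.ball 0 ‖x‖) < distG n g f s) := by
    intro s hs x hx
    constructor
    · intro hlt
      rcases eq_empty_or_nonempty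
        {t : ℝ | 0 ≤ t ∧ muG n g (Metric.ball 0 ‖x‖) < distG n g f t} with hE | hne
      · exfalso
        rw [rearrG, hE, Real.sSup_empty] at hlt
        exact absurd hlt (not_lt.mpr hs)
      · obtain ⟨t, htS, hst⟩ := exists_lt_of_lt_csSup hne hlt
        exact lt_of_lt_of_le htS.2 (distG_anti n g f hst.le)
    · intro hball
      obtain ⟨t, hts, hlt⟩ := distG_exists_gt n g f hf _ s hball
      exact lt_of_lt_of_le hts (le_csSup (hbdd x hx) ⟨le_trans hs hts.le, hlt⟩)
  refine ⟨hnonneg, hiff, ?_⟩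
  set ν := volume.withDensity fun x : EuclideanSpace ℝ (Fin n) => ENNReal.ofReal (g x) with hν
  have hballs : ∀ x : EuclideanSpace ℝ (Fin n),
      muG n g (Metric.ball 0 ‖x‖) = ν (Metric.ball 0 ‖x‖) :=
    fun x => muG_eq n g measurableSet_ball
  have hρ : Measurable fun x : EuclideanSpace ℝ (Fin n) => ν (Metric.ball 0 ‖x‖) := by
    have hmono : Monotone fun r : ℝ => ν (Metric.ball (0 : EuclideanSpace ℝ (Fin n)) r) :=
      fun a b hab => measure_mono (Metric.ball_subset_ball hab)
    exact hmono.measurable.comp measurable_norm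
  apply measurable_of_Ioi
  intro s
  by_cases hs : 0 ≤ s
  · have hA : MeasurableSet
        {x : EuclideanSpace ℝ (Fin n) | ν (Metric.ball 0 ‖x‖) < distG n g f s} :=
      measurableSet_lt hρ measurable_const
    by_cases h0 : s < rearrG n g f 0
    · have heq : rearrG n g f ⁻¹' Ioi s
          = ({x : EuclideanSpace ℝ (Fin n) | ν (Metric.ball 0 ‖x‖) < distG n g f s} \ {0})
              ∪ {0} := by
        ext x
        by_cases hx : x = 0
        · simp [hx, h0]
        · have hx2 : s < rearrG n g f x ↔ ν (Metric.ball 0 ‖x‖) < distG n g f s := by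
            rw [← hballs x]; exact hiff s hs x hx
          simp [hx, hx2]
      rw [heq]
      exact (hA.diff (measurableSet_singleton 0)).union (measurableSet_singleton 0)
    · have heq : rearrG n g f ⁻¹' Ioi s
          = {x : EuclideanSpace ℝ (Fin n) | ν (Metric.ball 0 ‖x‖) < distG n g f s} \ {0} := by
        ext x
        by_cases hx : x = 0
        · simp [hx, h0]
        · have hx2 : s < rearrG n g f x ↔ ν (Metric.ball 0 ‖x‖) < distG n g f s := by
            rw [← hballs x]; exact hiff s hs x hx
          simp [hx, hx2]
      rw [heq]
      exact hA.diff (measurableSet_singleton 0)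
  · have heq : rearrG n g f ⁻¹' Ioi s = univ := by
      ext x
      simp only [mem_preimage, mem_Ioi, mem_univ, iff_true]
      exact lt_of_lt_of_le (not_le.mp hs) (hnonneg x)
    rw [heq]
    exact MeasurableSet.univ

private lemma key_ball (n : ℕ) (hn : 0 < n) (g : EuclideanSpace ℝ (Fin n) → ℝ)
    (c : ENNReal) (W : Set (EuclideanSpace ℝ (Fin n)))
    (hfin : ∀ r : ℝ, (volume.withDensity fun x => ENNReal.ofReal (g x)) (Metric.ball 0 r) ≠ ⊤)
    (hc : c ≤ (volume.withDensity fun x => ENNReal.ofReal (g x)) univ)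
    (hsub : {x : EuclideanSpace ℝ (Fin n) | x ≠ 0 ∧
      (volume.withDensity fun y => ENNReal.ofReal (g y)) (Metric.ball 0 ‖x‖) < c} ⊆ W) :
    c ≤ (volume.withDensity fun x => ENNReal.ofReal (g x)) W := by
  set ν := volume.withDensity fun x : EuclideanSpace ℝ (Fin n) => ENNReal.ofReal (g x) with hν
  haveI : Nontrivial (EuclideanSpace ℝ (Fin n)) := by
    refine ⟨⟨EuclideanSpace.single ⟨0, hn⟩ (1:ℝ), 0, ?_⟩⟩
    intro h
    have := EuclideanSpace.norm_single (𝕜 := ℝ) (⟨0, hn⟩ : Fin n) 1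
    rw [h, norm_zero] at this
    simp at this
  have hac : ∀ A : Set (EuclideanSpace ℝ (Fin n)), volume A = 0 → ν A = 0 :=
    fun A hA => (withDensity_absolutelyContinuous volume _) hA
  have h0 : ν ({0} : Set (EuclideanSpace ℝ (Fin n))) = 0 := hac _ (measure_singleton 0)
  rcases eq_or_ne c 0 with rfl | hc0
  · exact zero_le
  by_cases hbdd : BddAbove {r : ℝ | ν (Metric.ball 0 r) < c}
  · set R := sSup {r : ℝ | ν (Metric.ball 0 r) < c} with hR
    have hTne : {r : ℝ | ν (Metric.ball 0 r) < c}.Nonempty := by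
      refine ⟨0, ?_⟩
      simp only [mem_setOf_eq, Metric.ball_zero, measure_empty]
      exact pos_iff_ne_zero.mpr hc0
    have hlt : ∀ r : ℝ, r < R → ν (Metric.ball 0 r) < c := by
      intro r hr
      obtain ⟨r', hr', hrr'⟩ := exists_lt_of_lt_csSup hTne hr
      exact lt_of_le_of_lt (measure_mono (Metric.ball_subset_ball hrr'.le)) hr'
    have hge : ∀ r : ℝ, R < r → c ≤ ν (Metric.ball 0 r) := by
      intro r hr
      by_contra h
      push_neg at h
      exact absurd (le_csSup hbdd h) (not_le.mpr hr)
    have hsub2 : Metric.ball (0 : EuclideanSpace ℝ (Fin n)) R \ {0} ⊆ W := by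
      intro x hx
      refine hsub ⟨fun h => hx.2 (by simp [h]), ?_⟩
      exact hlt ‖x‖ (mem_ball_zero_iff.mp hx.1)
    have hcb : c ≤ ν (Metric.closedBall 0 R) := by
      have hiI : ⋂ k : ℕ, Metric.ball (0 : EuclideanSpace ℝ (Fin n)) (R + ((k:ℝ)+1)⁻¹)
          = Metric.closedBall 0 R := by
        ext x
        simp only [mem_iInter, mem_ball_zero_iff, mem_closedBall_zero_iff]
        constructor
        · intro h
          by_contra hgt
          push_neg at hgt
          obtain ⟨k, hk⟩ := exists_nat_one_div_lt (sub_pos.mpr hgt)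
          rw [one_div] at hk
          exact absurd (h k) (not_lt.mpr (by linarith))
        · intro h k
          have : (0:ℝ) < ((k:ℝ)+1)⁻¹ := by positivity
          linarith
      have hanti : Antitone fun k : ℕ =>
          Metric.ball (0 : EuclideanSpace ℝ (Fin n)) (R + ((k:ℝ)+1)⁻¹) := by
        intro k j hkj
        apply Metric.ball_subset_ball
        have hcast : (k : ℝ) ≤ (j : ℝ) := Nat.cast_le.mpr hkj
        have h1 : ((j : ℝ) + 1)⁻¹ ≤ ((k : ℝ) + 1)⁻¹ := by
          apply inv_anti₀ (by positivity)
          linarith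
        linarith
      have htd := tendsto_measure_iInter_atTop (μ := ν)
        (s := fun k : ℕ => Metric.ball (0 : EuclideanSpace ℝ (Fin n)) (R + ((k:ℝ)+1)⁻¹))
        (fun k => measurableSet_ball.nullMeasurableSet) hanti ⟨0, hfin _⟩
      rw [hiI] at htd
      refine ge_of_tendsto htd (Eventually.of_forall fun k => hge _ ?_)
      have : (0:ℝ) < ((k:ℝ)+1)⁻¹ := by positivity
      linarith
    have hsplit : Metric.closedBall (0 : EuclideanSpace ℝ (Fin n)) R ⊆
        (Metric.ball 0 R \ {0}) ∪ (Metric.sphere 0 R ∪ {0}) := by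
      intro x hx
      rw [mem_closedBall_zero_iff] at hx
      by_cases hx0 : x = 0
      · exact Or.inr (Or.inr (by simp [hx0]))
      · by_cases hxR : ‖x‖ = R
        · exact Or.inr (Or.inl (by simpa [Metric.mem_sphere, dist_zero_right] using hxR))
        · exact Or.inl ⟨mem_ball_zero_iff.mpr (lt_of_le_of_ne hx hxR), by simp [hx0]⟩
    have hnull : ν (Metric.sphere (0 : EuclideanSpace ℝ (Fin n)) R ∪ {0}) = 0 := by
      apply hac
      exact measure_union_null (Measure.addHaar_sphere volume 0 R) (measure_singleton 0)
    calc c ≤ ν (Metric.closedBall 0 R) := hcb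
      _ ≤ ν (Metric.ball 0 R \ {0}) + ν (Metric.sphere 0 R ∪ {0}) :=
          le_trans (measure_mono hsplit) (measure_union_le _ _)
      _ = ν (Metric.ball 0 R \ {0}) := by rw [hnull, add_zero]
      _ ≤ ν W := measure_mono hsub2
  · have hall : ∀ r : ℝ, ν (Metric.ball 0 r) < c := by
      intro r
      obtain ⟨r', hr', hrr'⟩ := not_bddAbove_iff.mp hbdd r
      exact lt_of_le_of_lt (measure_mono (Metric.ball_subset_ball hrr'.le)) hr'
    have hsub3 : univ \ {0} ⊆ W := fun x hx => hsub ⟨fun h => hx.2 (by simp [h]), hall _⟩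
    calc c ≤ ν univ := hc
      _ = ν (univ \ {0}) := (measure_diff_null h0).symm
      _ ≤ ν W := measure_mono hsub3

private lemma degenerate_case (n : ℕ) (hn : 0 < n) (g : EuclideanSpace ℝ (Fin n) → ℝ)
    (hloc : MeasureTheory.LocallyIntegrable g MeasureTheory.volume)
    (hcont : ContinuousOn g {x : EuclideanSpace ℝ (Fin n) | x ≠ 0})
    (hmono : ∀ x y : EuclideanSpace ℝ (Fin n), x ≠ 0 → y ≠ 0 → ‖x‖ ≤ ‖y‖ → g y ≤ g x)
    (r : ℝ) (hr : 0 < r) (hball : muG n g (Metric.ball 0 r) = 0)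
    (F : EuclideanSpace ℝ (Fin n) → ENNReal) :
    ∫⁻ x, F x * ENNReal.ofReal (g x) = 0 := by
  haveI : Nontrivial (EuclideanSpace ℝ (Fin n)) := by
    refine ⟨⟨EuclideanSpace.single ⟨0, hn⟩ (1:ℝ), 0, ?_⟩⟩
    intro h
    have := EuclideanSpace.norm_single (𝕜 := ℝ) (⟨0, hn⟩ : Fin n) 1
    rw [h, norm_zero] at this
    simp at this
  have hgm : AEMeasurable (fun x : EuclideanSpace ℝ (Fin n) => ENNReal.ofReal (g x))
      (volume.restrict (Metric.ball 0 r)) :=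
    (hloc.aestronglyMeasurable.aemeasurable.ennreal_ofReal).restrict
  have h1 : (fun x : EuclideanSpace ℝ (Fin n) => ENNReal.ofReal (g x))
      =ᵐ[volume.restrict (Metric.ball 0 r)] 0 := (lintegral_eq_zero_iff' hgm).mp hball
  have h2 : (volume.restrict (Metric.ball (0 : EuclideanSpace ℝ (Fin n)) r))
      {x | ENNReal.ofReal (g x) ≠ 0} = 0 := by
    have := ae_iff.mp h1
    simpa using this
  have hg0 : ∀ x : EuclideanSpace ℝ (Fin n), x ≠ 0 → ‖x‖ < r → g x ≤ 0 := by
    intro x hx hxr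
    by_contra hpos
    push_neg at hpos
    have hcx : ContinuousAt g x := hcont.continuousAt (isOpen_ne.mem_nhds hx)
    have hU1 : g ⁻¹' Ioi 0 ∈ 𝓝 x := hcx.preimage_mem_nhds (Ioi_mem_nhds hpos)
    have hU2 : Metric.ball (0 : EuclideanSpace ℝ (Fin n)) r ∈ 𝓝 x :=
      Metric.isOpen_ball.mem_nhds (mem_ball_zero_iff.mpr hxr)
    obtain ⟨U, hUsub, hUopen, hxU⟩ := mem_nhds_iff.mp (inter_mem hU1 hU2)
    have hUb : U ⊆ Metric.ball (0 : EuclideanSpace ℝ (Fin n)) r :=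
      hUsub.trans inter_subset_right
    have hzero : volume U = 0 := by
      have e1 : volume U
          = (volume.restrict (Metric.ball (0 : EuclideanSpace ℝ (Fin n)) r)) U := by
        rw [Measure.restrict_apply' measurableSet_ball, inter_eq_self_of_subset_left hUb]
      have e2 : U ⊆ {x : EuclideanSpace ℝ (Fin n) | ENNReal.ofReal (g x) ≠ 0} := by
        intro y hy
        have : (0:ℝ) < g y := (hUsub hy).1
        exact (ENNReal.ofReal_pos.mpr this).ne'
      rw [e1]
      exact le_antisymm (h2 ▸ measure_mono e2) zero_le
    exact absurd hzero (hUopen.measure_pos volume ⟨x, hxU⟩).ne'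
  have hg0' : ∀ y : EuclideanSpace ℝ (Fin n), y ≠ 0 → g y ≤ 0 := by
    intro y hy
    set δ := min ‖y‖ (r/2) with hδ
    have hδpos : 0 < δ := lt_min (norm_pos_iff.mpr hy) (by linarith)
    set x₀ := EuclideanSpace.single (⟨0, hn⟩ : Fin n) δ with hx₀
    have hnx₀ : ‖x₀‖ = δ := by
      rw [hx₀, EuclideanSpace.norm_single, Real.norm_of_nonneg hδpos.le]
    have hx₀ne : x₀ ≠ 0 := by
      intro h
      rw [h, norm_zero] at hnx₀
      exact hδpos.ne hnx₀
    have hx₀r : ‖x₀‖ < r := by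
      rw [hnx₀]
      calc δ ≤ r/2 := min_le_right _ _
        _ < r := by linarith
    have := hmono x₀ y hx₀ne hy (by rw [hnx₀]; exact min_le_left _ _)
    exact this.trans (hg0 x₀ hx₀ne hx₀r)
  have hae : ∀ᵐ x : EuclideanSpace ℝ (Fin n) ∂volume, x ≠ 0 := by
    rw [ae_iff]
    have : {x : EuclideanSpace ℝ (Fin n) | ¬ x ≠ 0} = {0} := by ext x; simp
    rw [this]
    exact measure_singleton 0
  have : ∀ᵐ x : EuclideanSpace ℝ (Fin n) ∂volume, F x * ENNReal.ofReal (g x) = 0 := by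
    filter_upwards [hae] with x hx
    rw [ENNReal.ofReal_eq_zero.mpr (hg0' x hx), mul_zero]
  rw [lintegral_congr_ae this, lintegral_zero]

end AuxHL

/-- Hardy–Littlewood-type inequality: if `g` is admissible and `u, v` are measurable with
finite distribution functions for every `t > 0`, then
`∫ |u·v| g ≤ ∫ R_g[u]·R_g[v] g`. -/
theorem stmt11 (n : ℕ) (g u v : EuclideanSpace ℝ (Fin n) → ℝ)
    (hg : Admissible n g) (hu : Measurable u) (hv : Measurable v)
    (hufin : ∀ t : ℝ, 0 < t → distG n g u t < ⊤)
    (hvfin : ∀ t : ℝ, 0 < t → distG n g v t < ⊤) :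
    ∫⁻ x, ENNReal.ofReal |u x * v x| * ENNReal.ofReal (g x) ≤
      ∫⁻ x, ENNReal.ofReal (rearrG n g u x * rearrG n g v x) * ENNReal.ofReal (g x) := by
  obtain ⟨hloc, hrad, hcont, hnn, hmono⟩ := hg
  rcases Nat.eq_zero_or_pos n with hn | hn
  · subst hn
    exact dim0_case g u v
  -- dimension at least one
  by_cases hdeg : ∃ r : ℝ, 0 < r ∧ muG n g (Metric.ball 0 r) = 0
  · obtain ⟨r, hr, hball⟩ := hdeg
    rw [degenerate_case n hn g hloc hcont hmono r hr hball _]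
    exact zero_le
  push_neg at hdeg
  have hpos : ∀ r : ℝ, 0 < r → 0 < muG n g (Metric.ball 0 r) :=
    fun r hr => pos_iff_ne_zero.mpr (hdeg r hr)
  set ν := volume.withDensity fun x : EuclideanSpace ℝ (Fin n) => ENNReal.ofReal (g x) with hν
  have hgae : AEMeasurable (fun x : EuclideanSpace ℝ (Fin n) => ENNReal.ofReal (g x)) volume :=
    hloc.aestronglyMeasurable.aemeasurable.ennreal_ofReal
  have hconv : ∀ F : EuclideanSpace ℝ (Fin n) → ENNReal, Measurable F →
      ∫⁻ x, F x * ENNReal.ofReal (g x) = ∫⁻ x, F x ∂ν := by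
    intro F hF
    rw [hν, lintegral_withDensity_eq_lintegral_mul₀ hgae hF.aemeasurable]
    simp only [Pi.mul_apply]
    exact lintegral_congr fun x => mul_comm _ _
  have hfinballs : ∀ r : ℝ, ν (Metric.ball 0 r) ≠ ⊤ := by
    intro r
    have hint : IntegrableOn g (Metric.closedBall (0 : EuclideanSpace ℝ (Fin n)) r) volume :=
      hloc.integrableOn_isCompact (isCompact_closedBall 0 r)
    have hfin2 : ∫⁻ x in Metric.closedBall (0 : EuclideanSpace ℝ (Fin n)) r,
        ENNReal.ofReal (g x) ∂volume < ⊤ := hint.lintegral_lt_top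
    have : ν (Metric.ball 0 r) = ∫⁻ x in Metric.ball (0 : EuclideanSpace ℝ (Fin n)) r,
        ENNReal.ofReal (g x) ∂volume := withDensity_apply _ measurableSet_ball
    rw [this]
    exact (lt_of_le_of_lt (lintegral_mono_set Metric.ball_subset_closedBall) hfin2).ne
  obtain ⟨hRu0, hRuiff, hRum⟩ := rearr_facts n g u hu hufin hpos
  obtain ⟨hRv0, hRviff, hRvm⟩ := rearr_facts n g v hv hvfin hpos
  -- rewrite both sides as double integrals
  have hLHS : ∫⁻ x, ENNReal.ofReal |u x * v x| * ENNReal.ofReal (g x)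
      = ∫⁻ s in Ioi (0:ℝ), ∫⁻ t in Ioi (0:ℝ),
          ν ({x | s < |u x|} ∩ {x | t < |v x|}) := by
    rw [hconv (fun x => ENNReal.ofReal |u x * v x|) ((hu.mul hv).abs.ennreal_ofReal)]
    have : ∫⁻ x, ENNReal.ofReal |u x * v x| ∂ν
        = ∫⁻ x, ENNReal.ofReal |u x| * ENNReal.ofReal |v x| ∂ν :=
      lintegral_congr fun x => by
        rw [abs_mul, ENNReal.ofReal_mul (abs_nonneg _)]
    rw [this, double_layercake ν hu.abs hv.abs (fun x => abs_nonneg _) (fun x => abs_nonneg _)]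
  have hRHS : ∫⁻ x, ENNReal.ofReal (rearrG n g u x * rearrG n g v x) * ENNReal.ofReal (g x)
      = ∫⁻ s in Ioi (0:ℝ), ∫⁻ t in Ioi (0:ℝ),
          ν ({x | s < rearrG n g u x} ∩ {x | t < rearrG n g v x}) := by
    rw [hconv (fun x => ENNReal.ofReal (rearrG n g u x * rearrG n g v x)) ((hRum.mul hRvm).ennreal_ofReal)]
    have : ∫⁻ x, ENNReal.ofReal (rearrG n g u x * rearrG n g v x) ∂ν
        = ∫⁻ x, ENNReal.ofReal (rearrG n g u x) * ENNReal.ofReal (rearrG n g v x) ∂ν :=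
      lintegral_congr fun x => ENNReal.ofReal_mul (hRu0 x)
    rw [this, double_layercake ν hRum hRvm hRu0 hRv0]
  rw [hLHS, hRHS]
  -- compare the double integrals pointwise
  refine lintegral_mono_ae ?_
  filter_upwards [ae_restrict_mem measurableSet_Ioi] with s hs
  refine lintegral_mono_ae ?_
  filter_upwards [ae_restrict_mem measurableSet_Ioi] with t ht
  have hs0 : (0:ℝ) < s := hs
  have ht0 : (0:ℝ) < t := ht
  set c := min (distG n g u s) (distG n g v t) with hc
  have e_u : ν {x : EuclideanSpace ℝ (Fin n) | s < |u x|} = distG n g u s :=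
    (muG_eq n g (measurableSet_lt measurable_const hu.abs)).symm
  have e_v : ν {x : EuclideanSpace ℝ (Fin n) | t < |v x|} = distG n g v t :=
    (muG_eq n g (measurableSet_lt measurable_const hv.abs)).symm
  have h1 : ν ({x | s < |u x|} ∩ {x | t < |v x|}) ≤ c := by
    refine le_min ?_ ?_
    · rw [← e_u]; exact measure_mono inter_subset_left
    · rw [← e_v]; exact measure_mono inter_subset_right
  have h2 : c ≤ ν ({x | s < rearrG n g u x} ∩ {x | t < rearrG n g v x}) := by
    have hcuniv : c ≤ ν univ := by
      refine le_trans (min_le_left _ _) ?_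
      rw [← e_u]
      exact measure_mono (subset_univ _)
    refine key_ball n hn g c _ hfinballs hcuniv ?_
    intro x hx
    obtain ⟨hx0, hxball⟩ := hx
    have hballmu : muG n g (Metric.ball 0 ‖x‖) = ν (Metric.ball 0 ‖x‖) :=
      muG_eq n g measurableSet_ball
    constructor
    · refine (hRuiff s hs0.le x hx0).mpr ?_
      rw [hballmu]
      exact lt_of_lt_of_le hxball (min_le_left _ _)
    · refine (hRviff t ht0.le x hx0).mpr ?_
      rw [hballmu]
      exact lt_of_lt_of_le hxball (min_le_right _ _)
  exact h1.trans h2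
end

section
/- Let η > 0, k ∈ ℕ∪{0} and 0 < t ≤ η. Then: (1) if α < 1, ∫_t^η ds / w^{sl}_{k,α}(s) = (1/(1−α))·( A^1_k(η/t)^{1−α} − a^{1−α} ); (2) if α = 1, ∫_t^η ds / w^{sl}_{k,1}(s) = A^1_{k+1}(η/t) − a; (3) if α > 1, ∫_0^t ds / w^{sl}_{k,α}(s) = (1/(α−1))·A^1_k(η/t)^{1−α}. -/
open Real MeasureTheory Filter Topology Set

/-- `F(u) = a - log a + log u`. -/
noncomputable def Fa (a : ℝ) : ℝ → ℝ := fun u => a - Real.log a + Real.log u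

/-- `F̃(u) = a · ∏_{k=0}^∞ (F^k(u)/a)`. -/
noncomputable def Ftilde (a : ℝ) (u : ℝ) : ℝ := a * ∏' k : ℕ, ((Fa a)^[k] u / a)

/-- `φ(u) = a + ∫_a^u dt / F̃(t)`. -/
noncomputable def phiFun (a : ℝ) (u : ℝ) : ℝ := a + ∫ t in a..u, 1 / Ftilde a t

/-- The super-logarithm: `L(r) = φ(ar) - a` for `r ≥ 1` and `L(r) = -L(1/r)` for `0 < r < 1`. -/
noncomputable def superLog (a : ℝ) (r : ℝ) : ℝ :=
  if 1 ≤ r then phiFun a (a * r) - a else -(phiFun a (a * (1 / r)) - a)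

/-- `A^0_k(r) = F^k(ar)`. -/
noncomputable def A0 (a : ℝ) (k : ℕ) (r : ℝ) : ℝ := (Fa a)^[k] (a * r)

/-- `A^1_k(r) = F^k(φ(ar))` (with `A^1_0(r) = φ(ar)`). -/
noncomputable def A1 (a : ℝ) (k : ℕ) (r : ℝ) : ℝ := (Fa a)^[k] (phiFun a (a * r))

/-- `B^0(r) = F̃(ar)/(ar)`. -/
noncomputable def B0 (a : ℝ) (r : ℝ) : ℝ := Ftilde a (a * r) / (a * r)

/-- `w^{sl}_{k,α}(t) = t · B^0(η/t) · (∏_{j=0}^{k-1} A^1_j(η/t)) · A^1_k(η/t)^α`. -/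
noncomputable def wsl (a : ℝ) (k : ℕ) (α : ℝ) (η : ℝ) (t : ℝ) : ℝ :=
  t * B0 a (η / t) * (∏ j ∈ Finset.range k, A1 a j (η / t)) * (A1 a k (η / t)) ^ α

set_option maxHeartbeats 1000000
namespace Stmt16
variable {a η : ℝ}



lemma apos (ha : 1 < a) : (0:ℝ) < a := lt_trans one_pos ha

lemma Fa_fixed (ha : 1 < a) : Fa a a = a := by simp [Fa]

lemma Fa_ge (ha : 1 < a) {u : ℝ} (hu : a ≤ u) : a ≤ Fa a u := by
  have : Real.log a ≤ Real.log u := Real.log_le_log (apos ha) hu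
  simp only [Fa]; linarith

lemma Fa_sub_le (ha : 1 < a) {u : ℝ} (hu : a ≤ u) : Fa a u - a ≤ (u - a) / a := by
  have h1 : Real.log u - Real.log a = Real.log (u / a) :=
    (Real.log_div (by linarith [apos ha] : u ≠ 0) (ne_of_gt (apos ha))).symm
  have h2 : Real.log (u / a) ≤ u / a - 1 :=
    Real.log_le_sub_one_of_pos (div_pos (by linarith [apos ha]) (apos ha))
  have : Fa a u - a = Real.log u - Real.log a := by simp [Fa]; ring
  rw [this, h1]
  have : u / a - 1 = (u - a) / a := by field_simp
  linarith

lemma Fa_mono (ha : 1 < a) {u v : ℝ} (hu : 0 < u) (huv : u ≤ v) : Fa a u ≤ Fa a v := by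
  have := Real.log_le_log hu huv
  simp only [Fa]; linarith

lemma iter_ge (ha : 1 < a) {u : ℝ} (hu : a ≤ u) (k : ℕ) : a ≤ (Fa a)^[k] u := by
  induction k with
  | zero => simpa
  | succ n ih => rw [Function.iterate_succ_apply']; exact Fa_ge ha ih

lemma iter_sub_le (ha : 1 < a) {u : ℝ} (hu : a ≤ u) (k : ℕ) :
    (Fa a)^[k] u - a ≤ (u - a) / a ^ k := by
  induction k with
  | zero => simp
  | succ n ih =>
    rw [Function.iterate_succ_apply']
    calc Fa a ((Fa a)^[n] u) - a ≤ ((Fa a)^[n] u - a) / a := Fa_sub_le ha (iter_ge ha hu n)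
    _ ≤ ((u - a) / a ^ n) / a := by gcongr
    _ = (u - a) / a ^ (n + 1) := by rw [pow_succ]; ring

lemma summable_iter (ha : 1 < a) {u : ℝ} (hu : a ≤ u) :
    Summable (fun k : ℕ => (Fa a)^[k+1] u - a) := by
  have h0 : ∀ k : ℕ, 0 ≤ (Fa a)^[k+1] u - a := fun k => by linarith [iter_ge ha hu (k+1)]
  have hb : ∀ k : ℕ, (Fa a)^[k+1] u - a ≤ (u - a) * (1/a) ^ (k+1) := by
    intro k
    have := iter_sub_le ha hu (k+1)
    rw [div_pow, one_pow]
    calc (Fa a)^[k+1] u - a ≤ (u - a) / a ^ (k+1) := this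
    _ = (u - a) * (1 / a ^ (k+1)) := by ring
  have hg : Summable (fun k : ℕ => (u - a) * (1/a) ^ (k+1)) := by
    apply Summable.mul_left
    exact ((summable_geometric_of_lt_one (by positivity)
      (by rw [div_lt_one (apos ha)]; exact ha)).comp_injective (add_left_injective 1))
  exact Summable.of_nonneg_of_le h0 (fun k => (hb k)) hg

noncomputable def Sa (a : ℝ) (u : ℝ) : ℝ := ∑' k : ℕ, ((Fa a)^[k+1] u - a)

lemma Sa_nonneg (ha : 1 < a) {u : ℝ} (hu : a ≤ u) : 0 ≤ Sa a u :=
  tsum_nonneg (fun k => by linarith [iter_ge ha hu (k+1)])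

lemma factor_eq (ha : 1 < a) {u : ℝ} (hu : a ≤ u) (k : ℕ) :
    (Fa a)^[k] u / a = Real.exp ((Fa a)^[k+1] u - a) := by
  have hk : 0 < (Fa a)^[k] u := lt_of_lt_of_le (apos ha) (iter_ge ha hu k)
  rw [Function.iterate_succ_apply']
  have : Fa a ((Fa a)^[k] u) - a = Real.log ((Fa a)^[k] u) - Real.log a := by
    simp [Fa]; ring
  rw [this, Real.exp_sub, Real.exp_log hk, Real.exp_log (apos ha)]

lemma Ftilde_eq (ha : 1 < a) {u : ℝ} (hu : a ≤ u) :
    Ftilde a u = a * Real.exp (Sa a u) := by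
  unfold Ftilde
  congr 1
  have hs := summable_iter ha hu
  have hp : HasProd (fun k : ℕ => (Fa a)^[k] u / a) (Real.exp (Sa a u)) := by
    have hfun : (fun k : ℕ => (Fa a)^[k] u / a)
        = fun k : ℕ => Real.exp ((Fa a)^[k+1] u - a) := funext (factor_eq ha hu)
    rw [hfun]
    exact hs.hasSum.rexp
  exact hp.tprod_eq

lemma Ftilde_ge (ha : 1 < a) {u : ℝ} (hu : a ≤ u) : u ≤ Ftilde a u := by
  rw [Ftilde_eq ha hu]
  have h0 : Fa a u - a ≤ Sa a u := by
    have := Summable.le_tsum (summable_iter ha hu) 0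
      (fun k _ => by linarith [iter_ge ha hu (k+1)])
    simpa [Sa] using this
  have hlog : Real.log (u/a) = Fa a u - a := by
    rw [Real.log_div (by linarith [apos ha] : u ≠ 0) (ne_of_gt (apos ha))]
    simp [Fa]; ring
  calc u = a * (u / a) := by field_simp
  _ = a * Real.exp (Real.log (u/a)) := by
      rw [Real.exp_log (div_pos (by linarith [apos ha]) (apos ha))]
  _ ≤ a * Real.exp (Sa a u) := by
      apply mul_le_mul_of_nonneg_left _ (le_of_lt (apos ha))
      exact Real.exp_le_exp.2 (by rw [hlog] at *; linarith)

lemma Ftilde_pos (ha : 1 < a) {u : ℝ} (hu : a ≤ u) : 0 < Ftilde a u :=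
  lt_of_lt_of_le (lt_of_lt_of_le (apos ha) hu) (Ftilde_ge ha hu)



-- new material
lemma contOn_Fa (ha : 1 < a) : ContinuousOn (Fa a) (Ici a) := by
  apply ContinuousOn.add continuousOn_const
  exact Real.continuousOn_log.mono (fun x hx => by
    simp only [mem_compl_iff, mem_singleton_iff]
    exact ne_of_gt (lt_of_lt_of_le (apos ha) hx))

lemma mapsTo_Fa (ha : 1 < a) : MapsTo (Fa a) (Ici a) (Ici a) := fun x hx => Fa_ge ha hx

lemma contOn_iter (ha : 1 < a) (k : ℕ) : ContinuousOn (fun u => (Fa a)^[k] u) (Ici a) := by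
  induction k with
  | zero => exact continuousOn_id' _
  | succ n ih =>
    have : (fun u => (Fa a)^[n+1] u) = (Fa a) ∘ (fun u => (Fa a)^[n] u) := by
      funext u; rw [Function.iterate_succ_apply']; rfl
    rw [this]
    exact (contOn_Fa ha).comp ih (fun x hx => iter_ge ha hx n)

lemma contOn_Sa (ha : 1 < a) : ContinuousOn (Sa a) (Ici a) := by
  have key : ∀ M : ℝ, a ≤ M → ContinuousOn (Sa a) (Icc a M) := by
    intro M hM
    have hu : Summable (fun k : ℕ => (M - a) * (1/a) ^ (k+1)) := by
      apply Summable.mul_left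
      exact ((summable_geometric_of_lt_one (by positivity)
        (by rw [div_lt_one (apos ha)]; exact ha)).comp_injective (add_left_injective 1))
    have htu : TendstoUniformlyOn
        (fun (s : Finset ℕ) (x : ℝ) => ∑ k ∈ s, ((Fa a)^[k+1] x - a)) (Sa a) atTop (Icc a M) := by
      apply tendstoUniformlyOn_tsum hu
      intro k x hx
      rw [Real.norm_eq_abs, abs_of_nonneg (by linarith [iter_ge ha hx.1 (k+1)])]
      calc (Fa a)^[k+1] x - a ≤ (x - a) / a ^ (k+1) := iter_sub_le ha hx.1 (k+1)
      _ ≤ (M - a) / a ^ (k+1) := by gcongr; exact hx.2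
      _ = (M - a) * (1/a) ^ (k+1) := by rw [div_pow, one_pow]; ring
    apply htu.continuousOn
    apply Filter.Eventually.frequently
    filter_upwards with s
    exact continuousOn_finset_sum s (fun k _ =>
      ((contOn_iter ha (k+1)).sub continuousOn_const).mono Icc_subset_Ici_self)
  intro u hu
  have h1 : ContinuousWithinAt (Sa a) (Icc a (u+1)) u :=
    (key (u+1) (by linarith [mem_Ici.1 hu])).continuousWithinAt
      ⟨hu, by linarith⟩
  have : Icc a (u+1) = Ici a ∩ Iic (u+1) := (Ici_inter_Iic).symm
  rw [this] at h1
  exact (continuousWithinAt_inter (Iic_mem_nhds (by linarith))).1 h1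

lemma contOn_Ftilde (ha : 1 < a) : ContinuousOn (Ftilde a) (Ici a) := by
  apply ContinuousOn.congr (f := fun u => a * Real.exp (Sa a u))
    (continuousOn_const.mul ((contOn_Sa ha).rexp))
  exact fun u hu => Ftilde_eq ha hu

lemma contOn_invF (ha : 1 < a) : ContinuousOn (fun x => 1 / Ftilde a x) (Ici a) :=
  continuousOn_const.div (contOn_Ftilde ha) (fun x hx => ne_of_gt (Ftilde_pos ha hx))

lemma intInt (ha : 1 < a) {u v : ℝ} (hu : a ≤ u) (hv : a ≤ v) :
    IntervalIntegrable (fun x => 1 / Ftilde a x) volume u v :=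
  ((contOn_invF ha).mono (fun x hx => by
    rcases le_total u v with h | h
    · rw [uIcc_of_le h] at hx; exact le_trans hu hx.1
    · rw [uIcc_of_ge h] at hx; exact le_trans hv hx.1)).intervalIntegrable

lemma phi_fixed (ha : 1 < a) : phiFun a a = a := by simp [phiFun]

lemma phi_sub (ha : 1 < a) {u v : ℝ} (hu : a ≤ u) (hv : a ≤ v) :
    phiFun a v - phiFun a u = ∫ x in u..v, 1 / Ftilde a x := by
  simp only [phiFun]
  rw [add_sub_add_left_eq_sub]
  exact intervalIntegral.integral_interval_sub_left (intInt ha le_rfl hv) (intInt ha le_rfl hu)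

lemma phi_mono (ha : 1 < a) {u v : ℝ} (hu : a ≤ u) (huv : u ≤ v) :
    phiFun a u ≤ phiFun a v := by
  have hv : a ≤ v := le_trans hu huv
  have h := phi_sub ha hu hv
  have : 0 ≤ ∫ x in u..v, 1 / Ftilde a x := by
    apply intervalIntegral.integral_nonneg huv
    intro x hx
    exact le_of_lt (div_pos one_pos (Ftilde_pos ha (le_trans hu hx.1)))
  linarith

lemma phi_ge (ha : 1 < a) {u : ℝ} (hu : a ≤ u) : a ≤ phiFun a u := by
  have := phi_mono ha (le_refl a) hu
  rwa [phi_fixed ha] at this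

lemma contOn_phi (ha : 1 < a) : ContinuousOn (phiFun a) (Ici a) := by
  have : LipschitzOnWith (Real.toNNReal a⁻¹) (phiFun a) (Ici a) := by
    apply LipschitzOnWith.of_dist_le_mul
    intro x hx y hy
    rw [Real.dist_eq, Real.dist_eq]
    have h := phi_sub ha (mem_Ici.1 hy) (mem_Ici.1 hx)
    have hb : ∀ z ∈ uIoc y x, ‖1 / Ftilde a z‖ ≤ a⁻¹ := by
      intro z hz
      have hz' : a ≤ z := by
        rcases le_total y x with h' | h'
        · rw [uIoc_of_le h'] at hz; exact le_trans (mem_Ici.1 hy) (le_of_lt hz.1)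
        · rw [uIoc_of_ge h'] at hz; exact le_trans (mem_Ici.1 hx) (le_of_lt hz.1)
      rw [Real.norm_eq_abs, abs_of_pos (div_pos one_pos (Ftilde_pos ha hz')),
        one_div]
      exact inv_anti₀ (apos ha) (le_trans hz' (Ftilde_ge ha hz'))
    calc |phiFun a x - phiFun a y| = ‖∫ z in y..x, 1 / Ftilde a z‖ := by
          rw [← h]; rfl
    _ ≤ a⁻¹ * |x - y| := intervalIntegral.norm_integral_le_of_norm_le_const hb
    _ = (Real.toNNReal a⁻¹ : ℝ) * |x - y| := by
          rw [Real.coe_toNNReal _ (le_of_lt (inv_pos.2 (apos ha)))]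
  exact this.continuousOn

lemma hasDeriv_phi (ha : 1 < a) {u : ℝ} (hu : a < u) :
    HasDerivAt (phiFun a) (1 / Ftilde a u) u := by
  have hnhds : Ici a ∈ 𝓝 u := Ici_mem_nhds hu
  have h := intervalIntegral.integral_hasDerivAt_right
    (intInt ha le_rfl (le_of_lt hu))
    ⟨Ici a, hnhds, (contOn_invF ha).aestronglyMeasurable measurableSet_Ici⟩
    ((contOn_invF ha).continuousAt hnhds)
  have h2 : phiFun a = fun v => a + ∫ x in a..v, 1 / Ftilde a x := rfl
  rw [h2]; exact h.const_add a



-- functional equation for Sa and Ftilde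
lemma Sa_shift (ha : 1 < a) {u : ℝ} (hu : a ≤ u) :
    Sa a (Fa a u) = Sa a u - (Fa a u - a) := by
  have h1 : Sa a u = ((Fa a)^[1] u - a) + ∑' k : ℕ, ((Fa a)^[k+2] u - a) := by
    simpa [Sa] using Summable.tsum_eq_zero_add (summable_iter ha hu)
  have h2 : Sa a (Fa a u) = ∑' k : ℕ, ((Fa a)^[k+2] u - a) := by
    unfold Sa
    exact tsum_congr (fun k => by rw [← Function.iterate_succ_apply])
  rw [h2]
  simp only [Function.iterate_one] at h1
  linarith

lemma Ftilde_funct (ha : 1 < a) {u : ℝ} (hu : a ≤ u) :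
    Ftilde a (Fa a u) = a * Ftilde a u / u := by
  have hu0 : 0 < u := lt_of_lt_of_le (apos ha) hu
  rw [Ftilde_eq ha (Fa_ge ha hu), Sa_shift ha hu, Ftilde_eq ha hu]
  have : Real.exp (Sa a u - (Fa a u - a)) = Real.exp (Sa a u) * Real.exp (a - Fa a u) := by
    rw [← Real.exp_add]; ring_nf
  rw [this]
  have h3 : a - Fa a u = Real.log a - Real.log u := by simp [Fa]; ring
  rw [h3, Real.exp_sub, Real.exp_log (apos ha), Real.exp_log hu0]
  ring

lemma phi_funct (ha : 1 < a) {u : ℝ} (hu : a ≤ u) :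
    phiFun a u - a = a * (phiFun a (Fa a u) - a) := by
  have hu0 : 0 < u := lt_of_lt_of_le (apos ha) hu
  have hcov := intervalIntegral.integral_comp_smul_deriv'
    (f := Fa a) (f' := fun x => x⁻¹) (g := fun x => 1 / Ftilde a x) (a := a) (b := u)
    (fun x hx => by
      rw [uIcc_of_le hu] at hx
      have hx0 : x ≠ 0 := ne_of_gt (lt_of_lt_of_le (apos ha) hx.1)
      exact ((Real.hasDerivAt_log hx0).const_add (a - Real.log a)))
    (by
      apply continuousOn_inv₀.mono
      intro x hx
      rw [uIcc_of_le hu] at hx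
      exact ne_of_gt (lt_of_lt_of_le (apos ha) hx.1))
    (by
      apply (contOn_invF ha).mono
      rintro y ⟨x, hx, rfl⟩
      rw [uIcc_of_le hu] at hx
      exact Fa_ge ha hx.1)
  have hcongr : ∀ x ∈ uIcc a u, x⁻¹ • (1 / Ftilde a (Fa a x)) = a⁻¹ * (1 / Ftilde a x) := by
    intro x hx
    rw [uIcc_of_le hu] at hx
    have hx0 : 0 < x := lt_of_lt_of_le (apos ha) hx.1
    rw [Ftilde_funct ha hx.1]
    have hF : 0 < Ftilde a x := Ftilde_pos ha hx.1
    rw [smul_eq_mul]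
    field_simp
  have hL : (∫ x in a..u, x⁻¹ • (1 / Ftilde a (Fa a x)))
      = a⁻¹ * ∫ x in a..u, 1 / Ftilde a x := by
    rw [intervalIntegral.integral_congr hcongr, intervalIntegral.integral_const_mul]
  have hR : (∫ x in Fa a a..Fa a u, 1 / Ftilde a x) = phiFun a (Fa a u) - a := by
    rw [Fa_fixed ha]
    have := phi_sub ha (le_refl a) (Fa_ge ha hu)
    rw [phi_fixed ha] at this
    linarith [this]
  have hphi : (∫ x in a..u, 1 / Ftilde a x) = phiFun a u - a := by
    have := phi_sub ha (le_refl a) hu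
    rw [phi_fixed ha] at this
    linarith [this]
  simp only [Function.comp_apply] at hcov
  rw [hL, hphi, hR] at hcov
  have ha0 : a ≠ 0 := ne_of_gt (apos ha)
  rw [← hcov]
  field_simp

lemma phi_iter (ha : 1 < a) (n : ℕ) {u : ℝ} (hu : a ≤ u) :
    phiFun a u - a = a ^ n * (phiFun a ((Fa a)^[n] u) - a) := by
  induction n generalizing u with
  | zero => simp
  | succ m ih =>
    have h1 := phi_funct ha hu
    have h2 := ih (Fa_ge ha hu)
    rw [← Function.iterate_succ_apply] at h2
    rw [h1, h2, pow_succ]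
    ring

lemma tendsto_Fa_atTop (ha : 1 < a) : Tendsto (Fa a) atTop atTop := by
  unfold Fa
  exact tendsto_atTop_add_const_left _ _ Real.tendsto_log_atTop

lemma tendsto_iter_atTop (ha : 1 < a) (n : ℕ) :
    Tendsto (fun u => (Fa a)^[n] u) atTop atTop := by
  induction n with
  | zero => exact tendsto_id
  | succ m ih =>
    have : (fun u => (Fa a)^[m+1] u) = (Fa a) ∘ (fun u => (Fa a)^[m] u) := by
      funext u; rw [Function.iterate_succ_apply']; rfl
    rw [this]
    exact (tendsto_Fa_atTop ha).comp ih

lemma tendsto_phi_atTop (ha : 1 < a) : Tendsto (phiFun a) atTop atTop := by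
  rw [tendsto_atTop]
  intro M
  set b := a + 1 with hb
  have hab : a < b := by simp [hb]
  have hcpos : 0 < phiFun a b - a := by
    have h := phi_sub ha (le_refl a) (le_of_lt hab)
    rw [phi_fixed ha] at h
    have hpos : 0 < ∫ x in a..b, 1 / Ftilde a x := by
      apply intervalIntegral.intervalIntegral_pos_of_pos_on
        (intInt ha le_rfl (le_of_lt hab))
      · intro x hx
        exact div_pos one_pos (Ftilde_pos ha (le_of_lt hx.1))
      · exact hab
    linarith
  set c := phiFun a b - a
  obtain ⟨n, hn⟩ : ∃ n : ℕ, M - a ≤ a ^ n * c := by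
    have := (tendsto_pow_atTop_atTop_of_one_lt ha).atTop_mul_const hcpos
    exact (this.eventually_ge_atTop (M - a)).exists
  have h1 : ∀ᶠ u in atTop, b ≤ (Fa a)^[n] u :=
    (tendsto_iter_atTop ha n).eventually_ge_atTop b
  filter_upwards [h1, eventually_ge_atTop a] with u hu1 hu2
  have hiter := phi_iter ha n hu2
  have : c ≤ phiFun a ((Fa a)^[n] u) - a := by
    have := phi_mono ha (le_of_lt hab) hu1
    simp only [c]
    linarith
  nlinarith [pow_pos (apos ha) n, hiter]



lemma iter_fixed (ha : 1 < a) (k : ℕ) : (Fa a)^[k] a = a := by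
  induction k with
  | zero => simp
  | succ n ih => rw [Function.iterate_succ_apply', ih, Fa_fixed ha]

lemma A1_one (ha : 1 < a) (k : ℕ) : A1 a k 1 = a := by
  unfold A1
  rw [mul_one, phi_fixed ha, iter_fixed ha]

lemma ar_ge (ha : 1 < a) {r : ℝ} (hr : 1 ≤ r) : a ≤ a * r :=
  le_mul_of_one_le_right (apos ha).le hr

lemma A1_ge (ha : 1 < a) {r : ℝ} (hr : 1 ≤ r) (k : ℕ) : a ≤ A1 a k r :=
  iter_ge ha (phi_ge ha (ar_ge ha hr)) k

lemma A1_pos (ha : 1 < a) {r : ℝ} (hr : 1 ≤ r) (k : ℕ) : 0 < A1 a k r :=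
  lt_of_lt_of_le (apos ha) (A1_ge ha hr k)

lemma prod_pos (ha : 1 < a) {r : ℝ} (hr : 1 ≤ r) (k : ℕ) :
    0 < ∏ j ∈ Finset.range k, A1 a j r :=
  Finset.prod_pos (fun j _ => A1_pos ha hr j)

lemma hasDeriv_A1 (ha : 1 < a) {r : ℝ} (hr : 1 < r) (k : ℕ) :
    HasDerivAt (fun r => A1 a k r)
      (a / (Ftilde a (a * r) * ∏ j ∈ Finset.range k, A1 a j r)) r := by
  have har : a < a * r := by nlinarith [apos ha]
  have hF : 0 < Ftilde a (a * r) := Ftilde_pos ha har.le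
  induction k with
  | zero =>
    have hlin : HasDerivAt (fun r : ℝ => a * r) a r := by
      simpa using (hasDerivAt_id r).const_mul a
    have h := (hasDeriv_phi ha har).comp r hlin
    have : (fun r => A1 a 0 r) = fun r => phiFun a (a * r) := by
      funext r; simp [A1]
    rw [this]
    refine h.congr_deriv ?_
    symm
    simp
    field_simp
  | succ n ih =>
    have hv : 0 < A1 a n r := A1_pos ha hr.le n
    have hFa : HasDerivAt (Fa a) (A1 a n r)⁻¹ (A1 a n r) := by
      exact (Real.hasDerivAt_log hv.ne').const_add (a - Real.log a)
    have h := hFa.comp r ih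
    have heq : (fun r => A1 a (n+1) r) = (Fa a) ∘ (fun r => A1 a n r) := by
      funext r; simp only [A1, Function.comp_apply]
      rw [Function.iterate_succ_apply']
    rw [heq]
    refine h.congr_deriv ?_
    symm
    rw [Finset.prod_range_succ]
    have hP : (0:ℝ) < ∏ j ∈ Finset.range n, A1 a j r := prod_pos ha hr.le n
    rw [eq_comm, inv_mul_eq_div, div_div]
    rw [mul_assoc]


lemma one_le_div_self {s : ℝ} (hs : 0 < s) (hsη : s ≤ η) : 1 ≤ η / s :=
  (one_le_div hs).2 hsη

lemma contOn_g (ha : 1 < a) (hη : 0 < η) :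
    ContinuousOn (fun s => a * (η / s)) {s : ℝ | 0 < s ∧ s ≤ η} :=
  continuousOn_const.mul (continuousOn_const.div continuousOn_id
    (fun s hs => ne_of_gt hs.1))

lemma mapsTo_g (ha : 1 < a) (hη : 0 < η) :
    MapsTo (fun s => a * (η / s)) {s : ℝ | 0 < s ∧ s ≤ η} (Ici a) :=
  fun s hs => mem_Ici.2 (ar_ge ha (one_le_div_self hs.1 hs.2))

lemma contOn_A (ha : 1 < a) (hη : 0 < η) (k : ℕ) :
    ContinuousOn (fun s => A1 a k (η / s)) {s : ℝ | 0 < s ∧ s ≤ η} := by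
  have h1 : ContinuousOn (fun s => phiFun a (a * (η / s))) {s : ℝ | 0 < s ∧ s ≤ η} :=
    (contOn_phi ha).comp (contOn_g ha hη) (mapsTo_g ha hη)
  have h2 : MapsTo (fun s => phiFun a (a * (η / s))) {s : ℝ | 0 < s ∧ s ≤ η} (Ici a) :=
    fun s hs => mem_Ici.2 (phi_ge ha (ar_ge ha (one_le_div_self hs.1 hs.2)))
  exact (contOn_iter ha k).comp h1 h2

lemma contOn_B0 (ha : 1 < a) (hη : 0 < η) :
    ContinuousOn (fun s => B0 a (η / s)) {s : ℝ | 0 < s ∧ s ≤ η} := by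
  have h1 : ContinuousOn (fun s => Ftilde a (a * (η / s))) {s : ℝ | 0 < s ∧ s ≤ η} :=
    (contOn_Ftilde ha).comp (contOn_g ha hη) (mapsTo_g ha hη)
  exact ContinuousOn.div h1 (contOn_g ha hη) (fun s hs =>
    ne_of_gt (lt_of_lt_of_le (apos ha) (mapsTo_g ha hη hs)))

lemma B0_pos (ha : 1 < a) (hη : 0 < η) {s : ℝ} (hs : 0 < s) (hsη : s ≤ η) :
    0 < B0 a (η / s) := by
  have h := ar_ge ha (one_le_div_self hs hsη)
  exact div_pos (Ftilde_pos ha h) (lt_of_lt_of_le (apos ha) h)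

lemma wsl_pos (ha : 1 < a) (hη : 0 < η) {s : ℝ} (hs : 0 < s) (hsη : s ≤ η) (k : ℕ) (α : ℝ) :
    0 < wsl a k α η s := by
  have hr := one_le_div_self hs hsη
  exact mul_pos (mul_pos (mul_pos hs (B0_pos ha hη hs hsη)) (prod_pos ha hr k))
    (Real.rpow_pos_of_pos (A1_pos ha hr k) α)

lemma contOn_wsl_inv (ha : 1 < a) (hη : 0 < η) (k : ℕ) (α : ℝ) :
    ContinuousOn (fun s => 1 / wsl a k α η s) {s : ℝ | 0 < s ∧ s ≤ η} := by
  apply ContinuousOn.div continuousOn_const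
  · unfold wsl
    apply ContinuousOn.mul
    apply ContinuousOn.mul
    apply ContinuousOn.mul continuousOn_id (contOn_B0 ha hη)
    · exact continuousOn_finset_prod _ (fun j _ => contOn_A ha hη j)
    · apply ContinuousOn.rpow_const (contOn_A ha hη k)
      exact fun s hs => Or.inl (ne_of_gt (A1_pos ha (one_le_div_self hs.1 hs.2) k))
  · exact fun s hs => ne_of_gt (wsl_pos ha hη hs.1 hs.2 k α)

lemma hasDeriv_A (ha : 1 < a) (hη : 0 < η) {s : ℝ} (hs : 0 < s) (hsη : s < η) (k : ℕ) :
    HasDerivAt (fun s => A1 a k (η / s))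
      (-(1 / (s * B0 a (η / s) * ∏ j ∈ Finset.range k, A1 a j (η / s)))) s := by
  have hr : 1 < η / s := (one_lt_div hs).2 hsη
  have h0 : HasDerivAt (fun s : ℝ => η / s) (η * -(s^2)⁻¹) s := by
    simpa [div_eq_mul_inv] using (hasDerivAt_inv hs.ne').const_mul η
  have h := (hasDeriv_A1 ha hr k).comp s h0
  refine h.congr_deriv ?_
  symm
  have har : a < a * (η / s) := by nlinarith [apos ha]
  have hF : 0 < Ftilde a (a * (η / s)) := Ftilde_pos ha har.le
  have hP : (0:ℝ) < ∏ j ∈ Finset.range k, A1 a j (η / s) := prod_pos ha hr.le k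
  simp only [B0]
  have h1 : s ≠ 0 := hs.ne'
  have h2 : a ≠ 0 := (apos ha).ne'
  have h3 : η ≠ 0 := hη.ne'
  have h4 : Ftilde a (a * (η / s)) ≠ 0 := hF.ne'
  have h5 : (∏ j ∈ Finset.range k, A1 a j (η / s)) ≠ 0 := hP.ne'
  field_simp



noncomputable def Gfun (a η α : ℝ) (k : ℕ) : ℝ → ℝ :=
  fun s => -((1 - α)⁻¹ * (A1 a k (η / s)) ^ (1 - α))

lemma hasDeriv_G (ha : 1 < a) (hη : 0 < η) (k : ℕ) {x α : ℝ} (hα : α ≠ 1)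
    (hx : 0 < x) (hxη : x < η) :
    HasDerivAt (Gfun a η α k) (1 / wsl a k α η x) x := by
  have hr : 1 ≤ η / x := le_of_lt ((one_lt_div hx).2 hxη)
  have hApos : 0 < A1 a k (η / x) := A1_pos ha hr k
  have hA := hasDeriv_A ha hη hx hxη k
  have h1 := ((hA.rpow_const (p := 1 - α) (Or.inl hApos.ne')).const_mul (1 - α)⁻¹).neg
  refine h1.congr_deriv ?_
  symm
  have hXpos : 0 < x * B0 a (η / x) * ∏ j ∈ Finset.range k, A1 a j (η / x) :=
    mul_pos (mul_pos hx (B0_pos ha hη hx hxη.le)) (prod_pos ha hr k)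
  have hminus : A1 a k (η / x) ^ ((1 - α) - 1) = (A1 a k (η / x) ^ α)⁻¹ := by
    rw [show (1 - α) - 1 = -α by ring, Real.rpow_neg hApos.le]
  rw [hminus]
  have hβ : (1:ℝ) - α ≠ 0 := sub_ne_zero.2 (Ne.symm hα)
  have hAα : (0:ℝ) < A1 a k (η / x) ^ α := Real.rpow_pos_of_pos hApos α
  unfold wsl
  field_simp

lemma contOn_G (ha : 1 < a) (hη : 0 < η) (k : ℕ) (α : ℝ) :
    ContinuousOn (Gfun a η α k) {s : ℝ | 0 < s ∧ s ≤ η} := by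
  apply ContinuousOn.neg
  apply ContinuousOn.mul continuousOn_const
  apply ContinuousOn.rpow_const (contOn_A ha hη k)
  exact fun s hs => Or.inl (ne_of_gt (A1_pos ha (one_le_div_self hs.1 hs.2) k))

lemma tendsto_A_zero (ha : 1 < a) (hη : 0 < η) (k : ℕ) :
    Tendsto (fun s => A1 a k (η / s)) (𝓝[>] (0:ℝ)) atTop := by
  have h1 : Tendsto (fun s : ℝ => η / s) (𝓝[>] (0:ℝ)) atTop := by
    simpa [div_eq_mul_inv] using tendsto_inv_nhdsGT_zero.const_mul_atTop hη
  have h2 : Tendsto (fun s : ℝ => a * (η / s)) (𝓝[>] (0:ℝ)) atTop :=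
    h1.const_mul_atTop (apos ha)
  have heq : (fun s : ℝ => A1 a k (η / s))
      = (fun u => (Fa a)^[k] u) ∘ (phiFun a) ∘ (fun s : ℝ => a * (η / s)) := rfl
  rw [heq]
  exact (tendsto_iter_atTop ha k).comp ((tendsto_phi_atTop ha).comp h2)

lemma tendsto_G_zero (ha : 1 < a) (hη : 0 < η) (k : ℕ) {α : ℝ} (hα : 1 < α) :
    Tendsto (Gfun a η α k) (𝓝[>] (0:ℝ)) (𝓝 0) := by
  have h5 : Tendsto (fun s => (A1 a k (η / s)) ^ (1 - α)) (𝓝[>] (0:ℝ)) (𝓝 0) := by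
    have := (tendsto_rpow_neg_atTop (by linarith : (0:ℝ) < α - 1)).comp
      (tendsto_A_zero ha hη k)
    simpa [Function.comp_def, neg_sub] using this
  have := (h5.const_mul ((1 - α)⁻¹)).neg
  unfold Gfun
  simpa using this


end Stmt16

open Stmt16 in
/-- Explicit antiderivative identities for `1/w^{sl}_{k,α}`: for `η > 0`, `k ∈ ℕ∪{0}` and
`0 < t ≤ η`, (1) if `α < 1` then `∫_t^η ds/w^{sl}_{k,α}(s) = (A^1_k(η/t)^{1−α} − a^{1−α})/(1−α)`;
(2) `∫_t^η ds/w^{sl}_{k,1}(s) = A^1_{k+1}(η/t) − a`;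
(3) if `α > 1` then `∫_0^t ds/w^{sl}_{k,α}(s) = A^1_k(η/t)^{1−α}/(α−1)`. -/
theorem stmt16 (a : ℝ) (ha : 1 < a) (η : ℝ) (hη : 0 < η) (k : ℕ) (α : ℝ)
    (t : ℝ) (ht : 0 < t) (htη : t ≤ η) :
    (α < 1 → ∫ s in t..η, 1 / wsl a k α η s =
      (1 / (1 - α)) * ((A1 a k (η / t)) ^ (1 - α) - a ^ (1 - α))) ∧
    (∫ s in t..η, 1 / wsl a k 1 η s = A1 a (k + 1) (η / t) - a) ∧
    (1 < α → ∫ s in (0 : ℝ)..t, 1 / wsl a k α η s =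
      (1 / (α - 1)) * (A1 a k (η / t)) ^ (1 - α)) := by
  have hSsub : Icc t η ⊆ {s : ℝ | 0 < s ∧ s ≤ η} :=
    fun s hs => ⟨lt_of_lt_of_le ht hs.1, hs.2⟩
  have hηη : A1 a k (η / η) = a := by rw [div_self hη.ne', A1_one ha]
  refine ⟨?_, ?_, ?_⟩
  · -- part 1 : α < 1
    intro hα
    have hderiv : ∀ x ∈ Ioo t η, HasDerivAt (Gfun a η α k) (1 / wsl a k α η x) x :=
      fun x hx => hasDeriv_G ha hη k (ne_of_lt hα) (lt_trans ht hx.1) hx.2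
    have hcont : ContinuousOn (Gfun a η α k) (Icc t η) := (contOn_G ha hη k α).mono hSsub
    have hint : IntervalIntegrable (fun s => 1 / wsl a k α η s) volume t η := by
      apply ContinuousOn.intervalIntegrable
      rw [uIcc_of_le htη]
      exact (contOn_wsl_inv ha hη k α).mono hSsub
    rw [intervalIntegral.integral_eq_sub_of_hasDerivAt_of_le htη hcont hderiv hint]
    unfold Gfun
    rw [hηη]
    ring
  · -- part 2 : α = 1
    have hderiv : ∀ x ∈ Ioo t η,
        HasDerivAt (fun s => -(A1 a (k+1) (η / s))) (1 / wsl a k 1 η x) x := by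
      intro x hx
      have hx0 : 0 < x := lt_trans ht hx.1
      have h := (hasDeriv_A ha hη hx0 hx.2 (k+1)).neg
      refine h.congr_deriv ?_
      symm
      have hw : wsl a k 1 η x
          = x * B0 a (η / x) * ∏ j ∈ Finset.range (k+1), A1 a j (η / x) := by
        unfold wsl
        rw [Real.rpow_one, Finset.prod_range_succ]
        ring
      rw [hw]
      ring
    have hcont : ContinuousOn (fun s => -(A1 a (k+1) (η / s))) (Icc t η) :=
      ((contOn_A ha hη (k+1)).mono hSsub).neg
    have hint : IntervalIntegrable (fun s => 1 / wsl a k 1 η s) volume t η := by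
      apply ContinuousOn.intervalIntegrable
      rw [uIcc_of_le htη]
      exact (contOn_wsl_inv ha hη k 1).mono hSsub
    rw [intervalIntegral.integral_eq_sub_of_hasDerivAt_of_le htη hcont hderiv hint]
    rw [div_self hη.ne', A1_one ha]
    ring
  · -- part 3 : 1 < α
    intro hα
    set Gu : ℝ → ℝ := Function.update (Gfun a η α k) 0 0 with hGu
    have hupdate : ∀ y : ℝ, y ≠ 0 → Gu y = Gfun a η α k y :=
      fun y hy => Function.update_of_ne hy _ _
    have hGu_cont : ContinuousOn Gu (Icc 0 t) := by
      intro x hx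
      rcases eq_or_ne x 0 with rfl | hx0
      · rw [hGu]
        apply continuousWithinAt_update_same.2
        apply (tendsto_G_zero ha hη k hα).mono_left
        apply nhdsWithin_mono
        rintro y ⟨hy1, hy2⟩
        exact lt_of_le_of_ne hy1.1 (Ne.symm hy2)
      · have hx0' : 0 < x := lt_of_le_of_ne hx.1 (Ne.symm hx0)
        have hmem : x ∈ {s : ℝ | 0 < s ∧ s ≤ η} := ⟨hx0', le_trans hx.2 htη⟩
        have h1 : ContinuousWithinAt (Gfun a η α k) (Icc 0 t ∩ Ioi 0) x :=
          ((contOn_G ha hη k α) x hmem).mono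
            (fun y hy => ⟨hy.2, le_trans hy.1.2 htη⟩)
        have h2 : ContinuousWithinAt (Gfun a η α k) (Icc 0 t) x :=
          (continuousWithinAt_inter (Ioi_mem_nhds hx0')).1 h1
        apply h2.congr_of_eventuallyEq ?_ (hupdate x hx0)
        filter_upwards [mem_nhdsWithin_of_mem_nhds (Ioi_mem_nhds hx0')] with y hy
        exact hupdate y (ne_of_gt hy)
    have hderivGu : ∀ x ∈ Ioo (0:ℝ) t, HasDerivAt Gu (1 / wsl a k α η x) x := by
      intro x hx
      apply (hasDeriv_G ha hη k (ne_of_gt hα) hx.1 (lt_of_lt_of_le hx.2 htη)).congr_of_eventuallyEq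
      filter_upwards [Ioi_mem_nhds hx.1] with y hy
      exact hupdate y (ne_of_gt hy)
    have hintOn : IntegrableOn (fun s => 1 / wsl a k α η s) (Ioc 0 t) volume :=
      intervalIntegral.integrableOn_deriv_of_nonneg hGu_cont hderivGu
        (fun x hx => le_of_lt (div_pos one_pos
          (wsl_pos ha hη hx.1 (le_trans hx.2.le htη) k α)))
    have hint : IntervalIntegrable (fun s => 1 / wsl a k α η s) volume 0 t :=
      (intervalIntegrable_iff_integrableOn_Ioc_of_le ht.le).2 hintOn
    rw [intervalIntegral.integral_eq_sub_of_hasDerivAt_of_le ht.le hGu_cont hderivGu hint]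
    rw [hGu, Function.update_self, Function.update_of_ne ht.ne']
    unfold Gfun
    rw [show (1:ℝ) - α = -(α - 1) by ring, inv_neg]
    ring
end
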